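/- arXiv:0710.5566 — 6 statements merged into one kernel-verified Lean document; each statement's English description precedes it below -/
import Mathlib

section
/- Let ξ, η ∈ c₀* with ξ ≼ η, and suppose η has finite support (there is N with η_n = 0 for all n > N). Then there exists an orthostochastic matrix Q such that ξ_i = ∑_{j=1}^∞ Q_{ij} η_j for every i. -/
set_option maxHeartbeats 1000000

noncomputable section

open Filter Finset

/-- `ξ ∈ c₀*`: a nonnegative, nonincreasing sequence converging to `0`
(indexed from `0` here; the paper indexes from `1`). -/
def IsCoStar (ξ : ℕ → ℝ) : Prop :=
  (∀ n, 0 ≤ ξ n) ∧ Antitone ξ ∧ Tendsto ξ atTop (nhds 0)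

/-- `ξ ≺ η` (η majorizes ξ): all partial sums of `ξ` are dominated by those of `η`. -/
def Maj (ξ η : ℕ → ℝ) : Prop :=
  ∀ n : ℕ, ∑ j ∈ range n, ξ j ≤ ∑ j ∈ range n, η j

/-- `ξ ≼ η` (η strongly majorizes ξ): `ξ ≺ η` and
`liminf_n ∑_{j<n} (η_j - ξ_j) = 0` (the liminf taken in the extended reals). -/
def SMaj (ξ η : ℕ → ℝ) : Prop :=
  Maj ξ η ∧
    liminf (fun n => ((∑ j ∈ range n, (η j - ξ j) : ℝ) : EReal)) atTop = 0

/-- A matrix `U : ℕ × ℕ → ℝ` is orthogonal if its rows form an orthonormal family in ℓ²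
and its columns form an orthonormal family in ℓ². -/
def OrthogonalMatrix (U : ℕ → ℕ → ℝ) : Prop :=
  (∀ i i', HasSum (fun j => U i j * U i' j) (if i = i' then (1 : ℝ) else 0)) ∧
  (∀ j j', HasSum (fun i => U i j * U i j') (if j = j' then (1 : ℝ) else 0))

/-- A matrix `Q` is orthostochastic if it is the entrywise square of an orthogonal matrix. -/
def Orthostochastic (Q : ℕ → ℕ → ℝ) : Prop :=
  ∃ U : ℕ → ℕ → ℝ, OrthogonalMatrix U ∧ ∀ i j, Q i j = (U i j) ^ 2


lemma sum_split {k n : ℕ} (hk : k < n) (f g : ℕ → ℝ)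
    (h1 : ∀ j, j < k → f j = g j)
    (h3 : ∀ j, k < j → j < n → g j = f (j+1)) :
    ∑ j ∈ range (n+1), f j = (∑ j ∈ range n, g j) - g k + (f k + f (k+1)) := by
  have A : ∑ j ∈ range (k+2), f j = ∑ j ∈ range k, f j + f k + f (k+1) := by
    rw [Finset.sum_range_succ, Finset.sum_range_succ]
  have B : ∑ j ∈ range (k+1), g j = ∑ j ∈ range k, g j + g k := Finset.sum_range_succ g k
  have L1 : ∑ j ∈ range (n+1), f j
      = (∑ j ∈ range k, f j + f k + f (k+1)) + ∑ x ∈ range (n-k-1), f ((k+2) + x) := by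
    have hn1 : n + 1 = (k + 2) + (n - k - 1) := by omega
    rw [hn1, Finset.sum_range_add, A]
  have L2 : ∑ j ∈ range n, g j
      = (∑ j ∈ range k, g j + g k) + ∑ x ∈ range (n-k-1), g ((k+1) + x) := by
    have hn2 : n = (k + 1) + (n - k - 1) := by omega
    nth_rewrite 1 [hn2]
    rw [Finset.sum_range_add, B]
  have e1 : ∑ j ∈ range k, f j = ∑ j ∈ range k, g j :=
    Finset.sum_congr rfl (fun j hj => h1 j (mem_range.mp hj))
  have e2 : ∑ x ∈ range (n - k - 1), f ((k + 2) + x) = ∑ x ∈ range (n - k - 1), g ((k + 1) + x) := by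
    refine Finset.sum_congr rfl (fun x hx => ?_)
    have hx' := mem_range.mp hx
    have h := h3 (k + 1 + x) (by omega) (by omega)
    rw [h]; congr 1; omega
  rw [L1, L2, e1, e2]; ring

lemma sum_two {L k1 k2 : ℕ} (h12 : k1 ≠ k2) (hk1 : k1 < L) (hk2 : k2 < L) (a b : ℝ) (f : ℕ → ℝ)
    (hf : ∀ j, f j = (if j = k1 then a else 0) + (if j = k2 then b else 0)) :
    ∑ j ∈ range L, f j = a + b := by
  rw [Finset.sum_congr rfl (fun j _ => hf j), Finset.sum_add_distrib,
    Finset.sum_ite_eq' (range L) k1 (fun _ => a), Finset.sum_ite_eq' (range L) k2 (fun _ => b)]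
  simp [mem_range.mpr hk1, mem_range.mpr hk2]

lemma sum_one {L k1 : ℕ} (hk1 : k1 < L) (a : ℝ) (f : ℕ → ℝ)
    (hf : ∀ j, f j = (if j = k1 then a else 0)) :
    ∑ j ∈ range L, f j = a := by
  rw [Finset.sum_congr rfl (fun j _ => hf j), Finset.sum_ite_eq' (range L) k1 (fun _ => a)]
  simp [mem_range.mpr hk1]


lemma sum_delta_mul (L i i' : ℕ) (hi : i < L) :
    ∑ j ∈ range L, (if i = j then (1:ℝ) else 0) * (if i' = j then 1 else 0)
      = if i = i' then 1 else 0 := by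
  rw [Finset.sum_congr rfl (fun j _ =>
    show (if i = j then (1:ℝ) else 0) * (if i' = j then 1 else 0)
        = if i = j then (if i' = j then (1:ℝ) else 0) else 0 by split_ifs <;> ring)]
  rw [Finset.sum_ite_eq (range L) i (fun j => if i' = j then (1:ℝ) else 0),
    if_pos (mem_range.mpr hi)]
  by_cases h : i = i'
  · subst h; simp
  · rw [if_neg (fun hh => h hh.symm), if_neg h]

lemma sum_delta_mul' (L j j' : ℕ) (hj : j < L) :
    ∑ i ∈ range L, (if i = j then (1:ℝ) else 0) * (if i = j' then 1 else 0)
      = if j = j' then 1 else 0 := by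
  rw [Finset.sum_congr rfl (fun i _ =>
    show (if i = j then (1:ℝ) else 0) * (if i = j' then 1 else 0)
        = if j = i then (if i = j' then (1:ℝ) else 0) else 0 by
      split_ifs with a1 a2 a3 <;> first | ring1 | (exfalso; omega))]
  rw [Finset.sum_ite_eq (range L) j (fun i => if i = j' then (1:ℝ) else 0),
    if_pos (mem_range.mpr hj)]

lemma sum_delta_sq (L i : ℕ) (hi : i < L) (g : ℕ → ℝ) :
    ∑ j ∈ range L, (if i = j then (1:ℝ) else 0)^2 * g j = g i := by
  rw [Finset.sum_congr rfl (fun j _ =>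
    show (if i = j then (1:ℝ) else 0)^2 * g j
        = if i = j then g j else 0 by split_ifs <;> ring)]
  rw [Finset.sum_ite_eq (range L) i g, if_pos (mem_range.mpr hi)]

/-- Finite Horn theorem. -/
lemma horn : ∀ (L : ℕ) (ξ η : ℕ → ℝ), (∀ i, 0 ≤ ξ i) → Antitone ξ →
    (∀ j, 0 ≤ η j) → Antitone η →
    (∀ i, L ≤ i → ξ i = 0) → (∀ j, L ≤ j → η j = 0) →
    (∀ n : ℕ, ∑ j ∈ range n, ξ j ≤ ∑ j ∈ range n, η j) →
    (∑ i ∈ range L, ξ i = ∑ j ∈ range L, η j) →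
    ∃ M : ℕ → ℕ → ℝ,
      (∀ i i', i < L → i' < L → ∑ j ∈ range L, M i j * M i' j = (if i = i' then 1 else 0)) ∧
      (∀ j j', j < L → j' < L → ∑ i ∈ range L, M i j * M i j' = (if j = j' then 1 else 0)) ∧
      (∀ i, i < L → ∑ j ∈ range L, (M i j)^2 * η j = ξ i) := by
  intro L
  induction L with
  | zero =>
    intro ξ η _ _ _ _ _ _ _ _
    exact ⟨fun _ _ => 0, by intro i i' hi; omega, by intro j j' hj; omega, by intro i hi; omega⟩
  | succ L IH =>
    intro ξ η hξ0 hξa hη0 hηa hξs hηs hmaj hsum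
    have idworks : (∀ i, i < L + 1 → η i = ξ i) →
        ∃ M : ℕ → ℕ → ℝ,
        (∀ i i', i < L+1 → i' < L+1 → ∑ j ∈ range (L+1), M i j * M i' j = (if i = i' then 1 else 0)) ∧
        (∀ j j', j < L+1 → j' < L+1 → ∑ i ∈ range (L+1), M i j * M i j' = (if j = j' then 1 else 0)) ∧
        (∀ i, i < L+1 → ∑ j ∈ range (L+1), (M i j)^2 * η j = ξ i) := by
      intro hid
      refine ⟨fun i j => if i = j then 1 else 0,
        fun i i' hi _ => sum_delta_mul (L+1) i i' hi,
        fun j j' hj _ => sum_delta_mul' (L+1) j j' hj,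
        fun i hi => ?_⟩
      rw [sum_delta_sq (L+1) i hi η]
      exact hid i hi
    by_cases hz : ξ 0 = 0
    · have hxall : ∀ i, ξ i = 0 := fun i =>
        le_antisymm (hz ▸ hξa (Nat.zero_le i)) (hξ0 i)
      have hsz : ∑ j ∈ range (L+1), η j = 0 := by
        rw [← hsum]; exact Finset.sum_eq_zero (fun i _ => hxall i)
      have hyall : ∀ j, j < L + 1 → η j = 0 := by
        intro j hj
        exact (Finset.sum_eq_zero_iff_of_nonneg (fun i _ => hη0 i)).mp hsz j (mem_range.mpr hj)
      exact idworks (fun i hi => by rw [hyall i hi, hxall i])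
    · have hz' : 0 < ξ 0 := lt_of_le_of_ne (hξ0 0) (Ne.symm hz)
      have h01 : ξ 0 ≤ η 0 := by simpa using hmaj 1
      by_cases hL : L = 0
      · subst hL
        refine idworks ?_
        intro i hi
        interval_cases i
        have hsum1 : ξ 0 = η 0 := by simpa using hsum
        exact hsum1.symm
      · -- main merge case
        have hLpos : 0 < L := Nat.pos_of_ne_zero hL
        have hPex : ∃ k, η (k+1) ≤ ξ 0 := ⟨L, by rw [hηs (L+1) (by omega)]; exact le_of_lt hz'⟩
        set k := Nat.find hPex with hkdef
        have hk1 : η (k+1) ≤ ξ 0 := Nat.find_spec hPex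
        have hkmin : ∀ m, m < k → ξ 0 < η (m+1) := fun m hm => lt_of_not_ge (Nat.find_min hPex hm)
        have hk2 : ξ 0 ≤ η k := by
          rcases Nat.eq_zero_or_pos k with hk0 | hk0
          · rw [hk0]; exact h01
          · have h := hkmin (k-1) (by omega)
            have hk' : k - 1 + 1 = k := by omega
            rw [hk'] at h; linarith
        have hkL : k < L := by
          by_contra hcon
          push_neg at hcon
          have hstrict : ∀ j ∈ range (L+1), ξ j < η j := by
            intro j hj
            have hjr := mem_range.mp hj
            have hξj : ξ j ≤ ξ 0 := hξa (Nat.zero_le j)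
            have hlt : ξ 0 < η j := by
              rcases Nat.eq_zero_or_pos j with rfl | hj0
              · have h1' := hkmin 0 (by omega)
                have h2' : η 1 ≤ η 0 := hηa (by omega)
                linarith
              · have h := hkmin (j-1) (by omega)
                have hj' : j - 1 + 1 = j := by omega
                rw [hj'] at h; exact h
            linarith
          have hlt2 := Finset.sum_lt_sum_of_nonempty
            (Finset.nonempty_range_iff.mpr (by omega)) hstrict
          linarith
        obtain ⟨c, s, hcs1, hcs2⟩ : ∃ c s : ℝ, c^2 + s^2 = 1 ∧ c^2 * η k + s^2 * η (k+1) = ξ 0 := by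
          by_cases hdeg : η k = η (k+1)
          · refine ⟨1, 0, by norm_num, ?_⟩
            have heq : ξ 0 = η k := le_antisymm hk2 (by rw [hdeg]; exact hk1)
            rw [← heq]; ring
          · have hle : η (k+1) ≤ η k := hηa (by omega)
            have hd : 0 < η k - η (k+1) :=
              sub_pos.mpr (lt_of_le_of_ne hle (fun h => hdeg h.symm))
            refine ⟨Real.sqrt ((ξ 0 - η (k+1))/(η k - η (k+1))),
                    Real.sqrt ((η k - ξ 0)/(η k - η (k+1))), ?_, ?_⟩
            · rw [Real.sq_sqrt (div_nonneg (by linarith) (by linarith)),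
                  Real.sq_sqrt (div_nonneg (by linarith) (by linarith))]
              field_simp
              ring
            · rw [Real.sq_sqrt (div_nonneg (by linarith) (by linarith)),
                  Real.sq_sqrt (div_nonneg (by linarith) (by linarith))]
              field_simp
              ring
        have hm : s^2 * η k + c^2 * η (k+1) = η k + η (k+1) - ξ 0 := by
          linear_combination (η k + η (k+1)) * hcs1 - hcs2
        set ξ' : ℕ → ℝ := fun i => ξ (i+1) with hξ'def
        set η' : ℕ → ℝ := fun j =>
          if j < k then η j else if j = k then η k + η (k+1) - ξ 0 else η (j+1) with hη'def
        have hξ'v : ∀ i, ξ' i = ξ (i+1) := fun _ => rfl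
        have hη'k : η' k = η k + η (k+1) - ξ 0 := by
          simp [hη'def]
        have hη'lt : ∀ j, j < k → η' j = η j := fun j hj => by
          simp only [hη'def]; rw [if_pos hj]
        have hη'gt : ∀ j, k < j → η' j = η (j+1) := fun j hj => by
          simp only [hη'def]; rw [if_neg (by omega), if_neg (by omega)]
        have hsumrel : ∀ n, k < n → ∑ j ∈ range (n+1), η j = (∑ j ∈ range n, η' j) + ξ 0 := by
          intro n hn
          have h := sum_split hn η η' (fun j hj => (hη'lt j hj).symm)
            (fun j hj1 _ => (hη'gt j hj1))
          rw [h, hη'k]; ring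
        have hξsum : ∀ n, ∑ i ∈ range n, ξ' i = ∑ i ∈ range (n+1), ξ i - ξ 0 := by
          intro n
          rw [Finset.sum_range_succ' ξ n]
          simp only [hξ'v]
          ring
        have hη'0 : ∀ j, 0 ≤ η' j := by
          intro j
          rcases lt_trichotomy j k with h | heq | h
          · rw [hη'lt j h]; exact hη0 j
          · rw [heq, hη'k]; have := hη0 (k+1); linarith
          · rw [hη'gt j h]; exact hη0 (j+1)
        have hη'a : Antitone η' := by
          apply antitone_nat_of_succ_le
          intro n
          rcases lt_trichotomy (n+1) k with h | heq | h
          · rw [hη'lt (n+1) h, hη'lt n (by omega)]; exact hηa (by omega)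
          · rw [heq, hη'k, hη'lt n (by omega)]
            have h1 : η k ≤ η n := hηa (by omega)
            linarith
          · rcases lt_trichotomy n k with h2 | heq2 | h2
            · omega
            · rw [heq2, hη'gt (k+1) (by omega), hη'k]
              have h3 : η (k+1+1) ≤ η (k+1) := hηa (by omega)
              linarith
            · rw [hη'gt (n+1) (by omega), hη'gt n h2]
              exact hηa (by omega)
        have hξ's : ∀ i, L ≤ i → ξ' i = 0 := fun i hi => hξs (i+1) (by omega)
        have hη's : ∀ j, L ≤ j → η' j = 0 := fun j hj => by
          rw [hη'gt j (by omega)]; exact hηs (j+1) (by omega)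
        have hmaj' : ∀ n, ∑ i ∈ range n, ξ' i ≤ ∑ i ∈ range n, η' i := by
          intro n
          rcases le_or_gt n k with hn | hn
          · refine Finset.sum_le_sum (fun i hi => ?_)
            have hir := mem_range.mp hi
            rw [hη'lt i (by omega)]
            have c1 : ξ' i ≤ ξ 0 := hξa (by omega)
            have c2 : η k ≤ η i := hηa (by omega)
            linarith
          · have h1 := hsumrel n hn
            have h2 := hξsum n
            have h3 := hmaj (n+1)
            linarith
        have hsum' : ∑ i ∈ range L, ξ' i = ∑ j ∈ range L, η' j := by
          have h1 := hsumrel L hkL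
          have h2 := hξsum L
          linarith
        obtain ⟨M', hR', hC', hD'⟩ := IH ξ' η' (fun i => hξ0 (i+1))
          (fun a b hab => hξa (by omega)) hη'0 hη'a hξ's hη's hmaj' hsum'
        set M : ℕ → ℕ → ℝ := fun i j =>
          if i = 0 then (if j = k then c else if j = k+1 then s else 0)
          else if j < k then M' (i-1) j else if j = k then -s * M' (i-1) k
            else if j = k+1 then c * M' (i-1) k else M' (i-1) (j-1) with hMdef
        have hM0 : ∀ j, M 0 j = (if j = k then c else if j = k+1 then s else 0) := by
          intro j; simp [hMdef]
        have hMa : ∀ a j, M (a+1) j = (if j < k then M' a j else if j = k then -s * M' a k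
            else if j = k+1 then c * M' a k else M' a (j-1)) := by
          intro a j; simp [hMdef]
        have hM0k : M 0 k = c := by rw [hM0, if_pos rfl]
        have hM0k1 : M 0 (k+1) = s := by rw [hM0, if_neg (by omega), if_pos rfl]
        have hM0o : ∀ j, j ≠ k → j ≠ k+1 → M 0 j = 0 := fun j h1 h2 => by
          rw [hM0, if_neg h1, if_neg h2]
        have hMak : ∀ a, M (a+1) k = -s * M' a k := fun a => by
          rw [hMa, if_neg (by omega), if_pos rfl]
        have hMak1 : ∀ a, M (a+1) (k+1) = c * M' a k := fun a => by
          rw [hMa, if_neg (by omega), if_neg (by omega), if_pos rfl]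
        have hMalt : ∀ a j, j < k → M (a+1) j = M' a j := fun a j hj => by
          rw [hMa, if_pos hj]
        have hMagt : ∀ a j, k+1 < j → M (a+1) j = M' a (j-1) := fun a j hj => by
          rw [hMa, if_neg (by omega), if_neg (by omega), if_neg (by omega)]
        have hMao : ∀ a j, j ≠ k → j ≠ k + 1 → M (a+1) j = M' a (if j < k then j else j - 1) := by
          intro a j h1 h2
          rcases lt_or_gt_of_ne h1 with h | h
          · rw [hMalt a j h, if_pos h]
          · have h' : k + 1 < j := by omega
            rw [hMagt a j h', if_neg (by omega)]
        -- rows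
        have hrow00 : ∑ j ∈ range (L+1), M 0 j * M 0 j = 1 := by
          have h2 : ∑ j ∈ range (L+1), M 0 j * M 0 j = c^2 + s^2 := by
            apply sum_two (k1 := k) (k2 := k+1) (by omega) (by omega) (by omega)
            intro j
            rw [hM0 j]
            split_ifs <;> first | ring1 | (exfalso; omega)
          rw [h2, hcs1]
        have hrow0a : ∀ a, ∑ j ∈ range (L+1), M 0 j * M (a+1) j = 0 := by
          intro a
          have h2 : ∑ j ∈ range (L+1), M 0 j * M (a+1) j
              = c * (-s * M' a k) + s * (c * M' a k) := by
            apply sum_two (k1 := k) (k2 := k+1) (by omega) (by omega) (by omega)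
            intro j
            rw [hM0 j, hMa a j]
            split_ifs <;> first | ring1 | (exfalso; omega)
          rw [h2]; ring
        have hrowaa : ∀ a b, a < L → b < L →
            ∑ j ∈ range (L+1), M (a+1) j * M (b+1) j = (if a = b then 1 else 0) := by
          intro a b ha hb
          have hss : ∑ j ∈ range (L+1), M (a+1) j * M (b+1) j
              = (∑ j ∈ range L, M' a j * M' b j) - M' a k * M' b k
                + (M (a+1) k * M (b+1) k + M (a+1) (k+1) * M (b+1) (k+1)) :=
            sum_split hkL _ _
              (fun j hj => by
                show M (a+1) j * M (b+1) j = M' a j * M' b j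
                rw [hMalt a j hj, hMalt b j hj])
              (fun j hj1 hj2 => by
                show M' a j * M' b j = M (a+1) (j+1) * M (b+1) (j+1)
                rw [hMagt a (j+1) (by omega), hMagt b (j+1) (by omega)]
                norm_num)
          rw [hss, hR' a b ha hb, hMak a, hMak b, hMak1 a, hMak1 b]
          linear_combination (M' a k * M' b k) * hcs1
        have hR : ∀ i i', i < L+1 → i' < L+1 →
            ∑ j ∈ range (L+1), M i j * M i' j = (if i = i' then 1 else 0) := by
          intro i i' hi hi'
          rcases Nat.eq_zero_or_pos i with rfl | hipos
          · rcases Nat.eq_zero_or_pos i' with rfl | hipos'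
            · rw [hrow00, if_pos rfl]
            · obtain ⟨b, rfl⟩ : ∃ b, i' = b + 1 := ⟨i' - 1, by omega⟩
              rw [hrow0a b, if_neg (by omega)]
          · obtain ⟨a, rfl⟩ : ∃ a, i = a + 1 := ⟨i - 1, by omega⟩
            rcases Nat.eq_zero_or_pos i' with rfl | hipos'
            · rw [Finset.sum_congr rfl (fun j _ => mul_comm (M (a+1) j) (M 0 j)), hrow0a a,
                if_neg (by omega)]
            · obtain ⟨b, rfl⟩ : ∃ b, i' = b + 1 := ⟨i' - 1, by omega⟩
              rw [hrowaa a b (by omega) (by omega)]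
              by_cases hab : a = b
              · rw [if_pos hab, if_pos (by omega)]
              · rw [if_neg hab, if_neg (by omega)]
        -- columns
        have hC : ∀ j j', j < L+1 → j' < L+1 →
            ∑ i ∈ range (L+1), M i j * M i j' = (if j = j' then 1 else 0) := by
          intro j j' hj hj'
          rw [Finset.sum_range_succ' (fun i => M i j * M i j') L]
          by_cases h1 : j = k
          · subst h1
            by_cases h2 : j' = k
            · subst h2
              have e : ∑ i ∈ range L, M (i+1) k * M (i+1) k
                  = s^2 * (if k = k then (1:ℝ) else 0) := by
                rw [← hC' k k hkL hkL, Finset.mul_sum]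
                exact Finset.sum_congr rfl (fun i _ => by rw [hMak i]; ring)
              rw [e, hM0k, if_pos rfl]
              linear_combination hcs1
            · by_cases h3 : j' = k + 1
              · subst h3
                have e : ∑ i ∈ range L, M (i+1) k * M (i+1) (k+1)
                    = (-s*c) * (if k = k then (1:ℝ) else 0) := by
                  rw [← hC' k k hkL hkL, Finset.mul_sum]
                  exact Finset.sum_congr rfl (fun i _ => by rw [hMak i, hMak1 i]; ring)
                rw [e, hM0k, hM0k1, if_pos rfl, if_neg (by omega : ¬ k = k+1)]
                ring
              · set q := if j' < k then j' else j' - 1 with hq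
                have hqL : q < L := by rw [hq]; split_ifs <;> omega
                have hqk : q ≠ k := by rw [hq]; split_ifs <;> omega
                have e : ∑ i ∈ range L, M (i+1) k * M (i+1) j'
                    = (-s) * (if k = q then (1:ℝ) else 0) := by
                  rw [← hC' k q hkL hqL, Finset.mul_sum]
                  refine Finset.sum_congr rfl (fun i _ => ?_)
                  rw [hMak i, hMao i j' h2 h3, ← hq]; ring
                rw [e, hM0k, hM0o j' h2 h3, if_neg (fun hh => hqk hh.symm), if_neg (by omega)]
                ring
          · by_cases h1' : j = k + 1
            · subst h1'
              by_cases h2 : j' = k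
              · subst h2
                have e : ∑ i ∈ range L, M (i+1) (k+1) * M (i+1) k
                    = (c * -s) * (if k = k then (1:ℝ) else 0) := by
                  rw [← hC' k k hkL hkL, Finset.mul_sum]
                  exact Finset.sum_congr rfl (fun i _ => by rw [hMak i, hMak1 i]; ring)
                rw [e, hM0k, hM0k1, if_pos rfl, if_neg (by omega : ¬ k + 1 = k)]
                ring
              · by_cases h3 : j' = k + 1
                · subst h3
                  have e : ∑ i ∈ range L, M (i+1) (k+1) * M (i+1) (k+1)
                      = c^2 * (if k = k then (1:ℝ) else 0) := by
                    rw [← hC' k k hkL hkL, Finset.mul_sum]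
                    exact Finset.sum_congr rfl (fun i _ => by rw [hMak1 i]; ring)
                  rw [e, hM0k1, if_pos rfl, if_pos rfl]
                  linear_combination hcs1
                · set q := if j' < k then j' else j' - 1 with hq
                  have hqL : q < L := by rw [hq]; split_ifs <;> omega
                  have hqk : q ≠ k := by rw [hq]; split_ifs <;> omega
                  have e : ∑ i ∈ range L, M (i+1) (k+1) * M (i+1) j'
                      = c * (if k = q then (1:ℝ) else 0) := by
                    rw [← hC' k q hkL hqL, Finset.mul_sum]
                    refine Finset.sum_congr rfl (fun i _ => ?_)
                    rw [hMak1 i, hMao i j' h2 h3, ← hq]; ring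
                  rw [e, hM0k1, hM0o j' h2 h3, if_neg (fun hh => hqk hh.symm),
                    if_neg (by omega)]
                  ring
            · set q := if j < k then j else j - 1 with hq
              have hqL : q < L := by rw [hq]; split_ifs <;> omega
              have hqk : q ≠ k := by rw [hq]; split_ifs <;> omega
              by_cases h2 : j' = k
              · subst h2
                have e : ∑ i ∈ range L, M (i+1) j * M (i+1) k
                    = (-s) * (if q = k then (1:ℝ) else 0) := by
                  rw [← hC' q k hqL hkL, Finset.mul_sum]
                  refine Finset.sum_congr rfl (fun i _ => ?_)
                  rw [hMak i, hMao i j h1 h1', ← hq]; ring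
                rw [e, hM0k, hM0o j h1 h1', if_neg hqk, if_neg h1]
                ring
              · by_cases h3 : j' = k + 1
                · subst h3
                  have e : ∑ i ∈ range L, M (i+1) j * M (i+1) (k+1)
                      = c * (if q = k then (1:ℝ) else 0) := by
                    rw [← hC' q k hqL hkL, Finset.mul_sum]
                    refine Finset.sum_congr rfl (fun i _ => ?_)
                    rw [hMak1 i, hMao i j h1 h1', ← hq]; ring
                  rw [e, hM0k1, hM0o j h1 h1', if_neg hqk, if_neg h1']
                  ring
                · set q' := if j' < k then j' else j' - 1 with hq'
                  have hq'L : q' < L := by rw [hq']; split_ifs <;> omega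
                  have e : ∑ i ∈ range L, M (i+1) j * M (i+1) j'
                      = (if q = q' then (1:ℝ) else 0) := by
                    rw [← hC' q q' hqL hq'L]
                    refine Finset.sum_congr rfl (fun i _ => ?_)
                    rw [hMao i j h1 h1', hMao i j' h2 h3, ← hq, ← hq']
                  rw [e, hM0o j h1 h1']
                  have hiff : (q = q') ↔ (j = j') := by rw [hq, hq']; split_ifs <;> omega
                  by_cases hjj : j = j'
                  · rw [if_pos (hiff.mpr hjj), if_pos hjj]; ring
                  · rw [if_neg (fun hh => hjj (hiff.mp hh)), if_neg hjj]; ring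
        -- diagonal
        have hD : ∀ i, i < L+1 → ∑ j ∈ range (L+1), (M i j)^2 * η j = ξ i := by
          intro i hi
          rcases Nat.eq_zero_or_pos i with rfl | hipos
          · have h2 : ∑ j ∈ range (L+1), (M 0 j)^2 * η j = c^2 * η k + s^2 * η (k+1) := by
              apply sum_two (k1 := k) (k2 := k+1) (by omega) (by omega) (by omega)
              intro j
              rcases eq_or_ne j k with rfl | hj1
              · rw [hM0k, if_pos rfl, if_neg (by omega)]; ring
              · rcases eq_or_ne j (k+1) with rfl | hj2
                · rw [hM0k1, if_neg hj1, if_pos rfl]; ring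
                · rw [hM0o j hj1 hj2, if_neg hj1, if_neg hj2]; ring
            rw [h2, hcs2]
          · obtain ⟨a, rfl⟩ : ∃ a, i = a + 1 := ⟨i - 1, by omega⟩
            have hss : ∑ j ∈ range (L+1), (M (a+1) j)^2 * η j
                = (∑ j ∈ range L, (M' a j)^2 * η' j) - (M' a k)^2 * η' k
                  + ((M (a+1) k)^2 * η k + (M (a+1) (k+1))^2 * η (k+1)) :=
              sum_split hkL _ _
                (fun j hj => by
                  show (M (a+1) j)^2 * η j = (M' a j)^2 * η' j
                  rw [hMalt a j hj, hη'lt j hj])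
                (fun j hj1 hj2 => by
                  show (M' a j)^2 * η' j = (M (a+1) (j+1))^2 * η (j+1)
                  rw [hMagt a (j+1) (by omega), hη'gt j hj1]
                  norm_num)
            rw [hss, hD' a (by omega), hMak a, hMak1 a, hη'k, hξ'v a]
            linear_combination (M' a k)^2 * hm
        exact ⟨M, hR, hC, hD⟩


lemma householder (w : ℕ → ℝ) (hw : HasSum (fun m => w m ^ 2) 1) (hw0 : w 0 < 1) :
    ∃ H : ℕ → ℕ → ℝ, (∀ m, H m 0 = w m) ∧
      (∀ m m', HasSum (fun l => H m l * H m' l) (if m = m' then 1 else 0)) ∧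
      (∀ l l', HasSum (fun m => H m l * H m l') (if l = l' then 1 else 0)) := by
  set r2 : ℝ := 2 * (1 - w 0) with hr2
  have hr2pos : 0 < r2 := by rw [hr2]; linarith
  have hr2ne : r2 ≠ 0 := ne_of_gt hr2pos
  set u : ℕ → ℝ := fun m => (if m = 0 then 1 else 0) - w m with hu
  have huv : ∀ m, u m = (if m = 0 then 1 else 0) - w m := fun _ => rfl
  have husq : HasSum (fun m => u m ^ 2) r2 := by
    have h1 : HasSum (fun m => (if m = 0 then (1:ℝ) - 2 * w 0 else 0) + w m ^ 2) ((1 - 2*w 0) + 1) :=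
      (hasSum_ite_eq 0 (1 - 2*w 0)).add hw
    have h2 : (fun m => u m ^ 2)
        = fun m => (if m = 0 then (1:ℝ) - 2 * w 0 else 0) + w m ^ 2 := by
      funext m
      rw [huv m]
      rcases eq_or_ne m 0 with rfl | hm
      · rw [if_pos rfl, if_pos rfl]; ring
      · rw [if_neg hm, if_neg hm]; ring
    rw [h2]
    convert h1 using 1
    rw [hr2]; ring
  set H : ℕ → ℕ → ℝ := fun m l => (if m = l then 1 else 0) - (2/r2) * u m * u l with hH
  have hHv : ∀ m l, H m l = (if m = l then 1 else 0) - (2/r2) * u m * u l := fun _ _ => rfl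
  have hHsym : ∀ m l, H m l = H l m := by
    intro m l; rw [hHv, hHv]
    rcases eq_or_ne m l with rfl | hml
    · ring
    · rw [if_neg hml, if_neg (Ne.symm hml)]; ring
  have hH0 : ∀ m, H m 0 = w m := by
    intro m
    rw [hHv]
    have hu0 : u 0 = 1 - w 0 := by rw [huv]; simp
    rw [hu0, huv m]
    have hkey : (2/r2) * (1 - w 0) = 1 := by rw [hr2]; field_simp; exact div_self (show (1 - w 0) ≠ 0 by linarith)
    linear_combination (-(((if m = 0 then (1:ℝ) else 0) - w m))) * hkey
  have hrow : ∀ m m', HasSum (fun l => H m l * H m' l) (if m = m' then 1 else 0) := by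
    intro m m'
    set cmm : ℝ := (2/r2) * u m * ((2/r2) * u m') with hc
    have hFsupp : ∀ l, l ∉ ({m, m'} : Finset ℕ) → H m l * H m' l - cmm * u l ^ 2 = 0 := by
      intro l hl
      simp only [Finset.mem_insert, Finset.mem_singleton] at hl
      push_neg at hl
      rw [hHv, hHv, if_neg (fun h => hl.1 h.symm), if_neg (fun h => hl.2 h.symm), hc]
      ring
    have hF : HasSum (fun l => H m l * H m' l - cmm * u l ^ 2)
        (∑ l ∈ ({m, m'} : Finset ℕ), (H m l * H m' l - cmm * u l ^ 2)) :=
      hasSum_sum_of_ne_finset_zero hFsupp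
    have hcu : HasSum (fun l => cmm * u l ^ 2) (cmm * r2) := husq.mul_left cmm
    have hadd := hF.add hcu
    have heq : (fun l => (H m l * H m' l - cmm * u l ^ 2) + cmm * u l ^ 2)
        = fun l => H m l * H m' l := funext (fun l => by ring)
    rw [heq] at hadd
    convert hadd using 1
    rcases eq_or_ne m m' with rfl | hmm
    · rw [if_pos rfl, show ({m, m} : Finset ℕ) = {m} from by simp, Finset.sum_singleton,
        hHv m m, if_pos rfl, hc]
      field_simp
      ring
    · rw [if_neg hmm, Finset.sum_pair hmm, hHv m m, hHv m' m, hHv m m', hHv m' m',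
        if_pos rfl, if_neg hmm, if_neg (Ne.symm hmm), hc]
      field_simp
      simp only [↓reduceIte]
      ring
  have hcolH : ∀ l l', HasSum (fun q => H q l * H q l') (if l = l' then 1 else 0) := by
    intro l l'
    have heq : (fun q => H l q * H l' q) = (fun q => H q l * H q l') :=
      funext (fun q => by rw [hHsym l q, hHsym l' q])
    rw [← heq]
    exact hrow l l'
  exact ⟨H, hH0, hrow, hcolH⟩


lemma hasSum_of_finite (L : ℕ) (f : ℕ → ℝ) (h : ∀ j, L ≤ j → f j = 0) :
    HasSum f (∑ j ∈ range L, f j) :=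
  hasSum_sum_of_ne_finset_zero (fun b hb => h b (by simpa using hb))

lemma hasSum_delta (i : ℕ) (a : ℝ) : HasSum (fun j => if i = j then a else 0) a := by
  have h : (fun j => if i = j then a else 0) = fun j => if j = i then a else 0 := by
    funext j
    rcases eq_or_ne j i with rfl | hj
    · simp
    · simp [hj, Ne.symm hj]
  rw [h]
  exact hasSum_ite_eq i a

lemma pad (L : ℕ) (ξ η : ℕ → ℝ) (M : ℕ → ℕ → ℝ)
    (hR : ∀ i i', i < L → i' < L → ∑ j ∈ range L, M i j * M i' j = (if i = i' then 1 else 0))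
    (hC : ∀ j j', j < L → j' < L → ∑ i ∈ range L, M i j * M i j' = (if j = j' then 1 else 0))
    (hD : ∀ i, i < L → ∑ j ∈ range L, (M i j)^2 * η j = ξ i)
    (hξs : ∀ i, L ≤ i → ξ i = 0) (hηs : ∀ j, L ≤ j → η j = 0) :
    ∃ U : ℕ → ℕ → ℝ, OrthogonalMatrix U ∧ ∀ i, HasSum (fun j => U i j ^ 2 * η j) (ξ i) := by
  set U : ℕ → ℕ → ℝ := fun i j =>
    if i < L then (if j < L then M i j else 0) else (if i = j then 1 else 0) with hU
  have hUin : ∀ i j, i < L → j < L → U i j = M i j := fun i j hi hj => by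
    simp only [hU]; rw [if_pos hi, if_pos hj]
  have hUright : ∀ i j, i < L → L ≤ j → U i j = 0 := fun i j hi hj => by
    simp only [hU]; rw [if_pos hi, if_neg (by omega)]
  have hUlow : ∀ i j, L ≤ i → U i j = (if i = j then 1 else 0) := fun i j hi => by
    simp only [hU]; rw [if_neg (by omega)]
  refine ⟨U, ⟨?_, ?_⟩, ?_⟩
  · intro i i'
    by_cases hi : i < L
    · by_cases hi' : i' < L
      · have hsupp : ∀ j, L ≤ j → U i j * U i' j = 0 := fun j hj => by
          rw [hUright i j hi hj, zero_mul]
        have h1 := hasSum_of_finite L _ hsupp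
        have h2 : ∑ j ∈ range L, U i j * U i' j = if i = i' then 1 else 0 := by
          rw [Finset.sum_congr rfl (fun j hj => by
            rw [hUin i j hi (mem_range.mp hj), hUin i' j hi' (mem_range.mp hj)])]
          exact hR i i' hi hi'
        rwa [h2] at h1
      · have hz : ∀ j, U i j * U i' j = 0 := by
          intro j
          by_cases hj : j < L
          · rw [hUlow i' j (by omega), if_neg (by omega), mul_zero]
          · rw [hUright i j hi (by omega), zero_mul]
        rw [show (fun j => U i j * U i' j) = fun _ => (0:ℝ) from funext hz,
          if_neg (by omega)]
        exact hasSum_zero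
    · by_cases hi' : i' < L
      · have hz : ∀ j, U i j * U i' j = 0 := by
          intro j
          by_cases hj : j < L
          · rw [hUlow i j (by omega), if_neg (by omega), zero_mul]
          · rw [hUright i' j hi' (by omega), mul_zero]
        rw [show (fun j => U i j * U i' j) = fun _ => (0:ℝ) from funext hz,
          if_neg (by omega)]
        exact hasSum_zero
      · rcases eq_or_ne i i' with rfl | hne
        · rw [if_pos rfl]
          have hz : ∀ j, U i j * U i j = (if i = j then 1 else 0) := by
            intro j
            rw [hUlow i j (by omega)]
            rcases eq_or_ne i j with rfl | hj
            · simp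
            · simp [hj]
          rw [show (fun j => U i j * U i j) = fun j => (if i = j then (1:ℝ) else 0) from funext hz]
          exact hasSum_delta i 1
        · rw [if_neg hne]
          have hz : ∀ j, U i j * U i' j = 0 := by
            intro j
            rw [hUlow i j (by omega), hUlow i' j (by omega)]
            rcases eq_or_ne i j with rfl | hj
            · simp [show ¬ i' = i from fun h => hne h.symm]
            · simp [hj]
          rw [show (fun j => U i j * U i' j) = fun _ => (0:ℝ) from funext hz]
          exact hasSum_zero
  · intro j j'
    by_cases hj : j < L
    · by_cases hj' : j' < L
      · have hsupp : ∀ i, L ≤ i → U i j * U i j' = 0 := fun i hi => by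
          rw [hUlow i j hi, if_neg (by omega), zero_mul]
        have h1 := hasSum_of_finite L _ hsupp
        have h2 : ∑ i ∈ range L, U i j * U i j' = if j = j' then 1 else 0 := by
          rw [Finset.sum_congr rfl (fun i hi => by
            rw [hUin i j (mem_range.mp hi) hj, hUin i j' (mem_range.mp hi) hj'])]
          exact hC j j' hj hj'
        rwa [h2] at h1
      · have hz : ∀ i, U i j * U i j' = 0 := by
          intro i
          by_cases hi : i < L
          · rw [hUright i j' hi (by omega), mul_zero]
          · rw [hUlow i j (by omega), if_neg (by omega), zero_mul]
        rw [show (fun i => U i j * U i j') = fun _ => (0:ℝ) from funext hz,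
          if_neg (by omega)]
        exact hasSum_zero
    · by_cases hj' : j' < L
      · have hz : ∀ i, U i j * U i j' = 0 := by
          intro i
          by_cases hi : i < L
          · rw [hUright i j hi (by omega), zero_mul]
          · rw [hUlow i j' (by omega), if_neg (by omega), mul_zero]
        rw [show (fun i => U i j * U i j') = fun _ => (0:ℝ) from funext hz,
          if_neg (by omega)]
        exact hasSum_zero
      · rcases eq_or_ne j j' with rfl | hne
        · rw [if_pos rfl]
          have hz : ∀ i, U i j * U i j = (if j = i then 1 else 0) := by
            intro i
            by_cases hi : i < L
            · rw [hUright i j hi (by omega), zero_mul, if_neg (by omega)]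
            · rw [hUlow i j (by omega)]
              rcases eq_or_ne i j with rfl | hij
              · simp
              · simp [hij, Ne.symm hij]
          rw [show (fun i => U i j * U i j) = fun i => (if j = i then (1:ℝ) else 0) from funext hz]
          exact hasSum_delta j 1
        · rw [if_neg hne]
          have hz : ∀ i, U i j * U i j' = 0 := by
            intro i
            by_cases hi : i < L
            · rw [hUright i j hi (by omega), zero_mul]
            · rw [hUlow i j (by omega), hUlow i j' (by omega)]
              rcases eq_or_ne i j with rfl | hij
              · simp [hne]
              · simp [hij]
          rw [show (fun i => U i j * U i j') = fun _ => (0:ℝ) from funext hz]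
          exact hasSum_zero
  · intro i
    by_cases hi : i < L
    · have hsupp : ∀ j, L ≤ j → U i j ^ 2 * η j = 0 := fun j hj => by
        rw [hUright i j hi hj]; ring
      have h1 := hasSum_of_finite L _ hsupp
      have h2 : ∑ j ∈ range L, U i j ^ 2 * η j = ξ i := by
        rw [Finset.sum_congr rfl (fun j hj => by
          rw [hUin i j hi (mem_range.mp hj)])]
        exact hD i hi
      rwa [h2] at h1
    · have hz : ∀ j, U i j ^ 2 * η j = (if i = j then η i else 0) := by
        intro j
        rw [hUlow i j (by omega)]
        rcases eq_or_ne i j with rfl | hij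
        · simp
        · simp [hij]
      rw [show (fun j => U i j ^ 2 * η j) = fun j => (if i = j then η i else 0) from funext hz,
        show ξ i = η i from by rw [hξs i (by omega), hηs i (by omega)]]
      exact hasSum_delta i (η i)

lemma sum_reindex (t p : ℕ) (hpt : p ≤ t) (g : ℕ → ℝ) :
    (∑ i ∈ range t, g (if i < p then i else i + 1)) + g p = ∑ a ∈ range (t+1), g a := by
  have h1 : t = p + (t - p) := by omega
  have h2 : t + 1 = (p + 1) + (t - p) := by omega
  rw [h2, Finset.sum_range_add]
  nth_rewrite 1 [h1]
  rw [Finset.sum_range_add, Finset.sum_range_succ]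
  have e1 : ∑ i ∈ range p, g (if i < p then i else i + 1) = ∑ i ∈ range p, g i :=
    Finset.sum_congr rfl (fun i hi => by rw [if_pos (mem_range.mp hi)])
  have e2 : ∑ x ∈ range (t - p), g (if p + x < p then p + x else p + x + 1)
      = ∑ x ∈ range (t - p), g (p + 1 + x) :=
    Finset.sum_congr rfl (fun x _ => by rw [if_neg (by omega)]; congr 1; omega)
  rw [e1, e2]; ring

/-- Expansion of a finite orthogonal block, blowing up row `p` into infinitely many rows. -/
lemma expand (t p : ℕ) (hpt : p ≤ t) (ξ η ζ : ℕ → ℝ) (M H : ℕ → ℕ → ℝ)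
    (hR : ∀ i i', i < t+1 → i' < t+1 →
      ∑ j ∈ range (t+1), M i j * M i' j = (if i = i' then 1 else 0))
    (hC : ∀ j j', j < t+1 → j' < t+1 →
      ∑ i ∈ range (t+1), M i j * M i j' = (if j = j' then 1 else 0))
    (hD : ∀ i, i < t+1 → ∑ j ∈ range (t+1), (M i j)^2 * η j = ζ i)
    (hHrow : ∀ m m', HasSum (fun l => H m l * H m' l) (if m = m' then 1 else 0))
    (hHcol : ∀ l l', HasSum (fun m => H m l * H m l') (if l = l' then 1 else 0))
    (hηs : ∀ j, t+1 ≤ j → η j = 0)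
    (hd1 : ∀ i, i < p → ζ i = ξ i)
    (hd2 : ∀ i, p ≤ i → i < t → ζ (i+1) = ξ i)
    (hd3 : ∀ m, (H m 0)^2 * ζ p = ξ (t+m)) :
    ∃ U : ℕ → ℕ → ℝ, OrthogonalMatrix U ∧ ∀ i, HasSum (fun j => U i j ^ 2 * η j) (ξ i) := by
  classical
  set r : ℕ → ℕ := fun i => if i < p then i else i + 1 with hr
  have hrv : ∀ i, r i = if i < p then i else i + 1 := fun _ => rfl
  have hrle : ∀ i, i < t → r i ≤ t := by intro i hi; rw [hrv]; split_ifs <;> omega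
  have hrnp : ∀ i, r i ≠ p := by intro i; rw [hrv]; split_ifs <;> omega
  have hrinj : ∀ i i', i < t → i' < t → (r i = r i' ↔ i = i') := by
    intro i i' _ _; rw [hrv, hrv]; split_ifs <;> omega
  set U : ℕ → ℕ → ℝ := fun i j =>
    if i < t then (if j ≤ t then M (r i) j else 0)
    else (if j ≤ t then H (i-t) 0 * M p j else H (i-t) (j-t)) with hU
  have hUtop : ∀ i j, i < t → j ≤ t → U i j = M (r i) j := fun i j hi hj => by
    simp only [hU]; rw [if_pos hi, if_pos hj]
  have hUtopz : ∀ i j, i < t → t < j → U i j = 0 := fun i j hi hj => by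
    simp only [hU]; rw [if_pos hi, if_neg (by omega)]
  have hUbot : ∀ m j, j ≤ t → U (t+m) j = H m 0 * M p j := fun m j hj => by
    simp only [hU]; rw [if_neg (by omega), if_pos hj]
    congr 2
    omega
  have hUbot2 : ∀ m j, t < j → U (t+m) j = H m (j-t) := fun m j hj => by
    simp only [hU]; rw [if_neg (by omega), if_neg (by omega)]
    congr 1
    omega
  have hw1 : HasSum (fun m => H m 0 * H m 0) 1 := by
    have := hHcol 0 0
    rwa [if_pos rfl] at this
  refine ⟨U, ⟨?_, ?_⟩, ?_⟩
  · -- rows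
    intro i i'
    by_cases hi : i < t
    · by_cases hi' : i' < t
      · -- both top
        have hsupp : ∀ j, t+1 ≤ j → U i j * U i' j = 0 := fun j hj => by
          rw [hUtopz i j hi (by omega), zero_mul]
        have h1 := hasSum_of_finite (t+1) _ hsupp
        have h2 : ∑ j ∈ range (t+1), U i j * U i' j = if i = i' then 1 else 0 := by
          rw [Finset.sum_congr rfl (fun j hj => by
            rw [hUtop i j hi (by have := mem_range.mp hj; omega),
                hUtop i' j hi' (by have := mem_range.mp hj; omega)]),
            hR (r i) (r i') (by have := hrle i hi; omega) (by have := hrle i' hi'; omega)]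
          by_cases hii : i = i'
          · rw [if_pos ((hrinj i i' hi hi').mpr hii), if_pos hii]
          · rw [if_neg (fun h => hii ((hrinj i i' hi hi').mp h)), if_neg hii]
        rwa [h2] at h1
      · -- top × bottom
        obtain ⟨m', rfl⟩ : ∃ m', i' = t + m' := ⟨i' - t, by omega⟩
        have hsupp : ∀ j, t+1 ≤ j → U i j * U (t+m') j = 0 := fun j hj => by
          rw [hUtopz i j hi (by omega), zero_mul]
        have h1 := hasSum_of_finite (t+1) _ hsupp
        have h2 : ∑ j ∈ range (t+1), U i j * U (t+m') j = 0 := by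
          rw [Finset.sum_congr rfl (fun j hj => by
            rw [hUtop i j hi (by have := mem_range.mp hj; omega),
                hUbot m' j (by have := mem_range.mp hj; omega)])]
          have e : ∑ j ∈ range (t+1), M (r i) j * (H m' 0 * M p j)
              = H m' 0 * ∑ j ∈ range (t+1), M (r i) j * M p j := by
            rw [Finset.mul_sum]
            exact Finset.sum_congr rfl (fun j _ => by ring)
          rw [e, hR (r i) p (by have := hrle i hi; omega) (by omega),
            if_neg (hrnp i), mul_zero]
        rw [h2] at h1
        rwa [if_neg (by omega)]
    · by_cases hi' : i' < t
      · -- bottom × top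
        obtain ⟨m, rfl⟩ : ∃ m, i = t + m := ⟨i - t, by omega⟩
        have hsupp : ∀ j, t+1 ≤ j → U (t+m) j * U i' j = 0 := fun j hj => by
          rw [hUtopz i' j hi' (by omega), mul_zero]
        have h1 := hasSum_of_finite (t+1) _ hsupp
        have h2 : ∑ j ∈ range (t+1), U (t+m) j * U i' j = 0 := by
          rw [Finset.sum_congr rfl (fun j hj => by
            rw [hUtop i' j hi' (by have := mem_range.mp hj; omega),
                hUbot m j (by have := mem_range.mp hj; omega)])]
          have e : ∑ j ∈ range (t+1), H m 0 * M p j * M (r i') j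
              = H m 0 * ∑ j ∈ range (t+1), M (r i') j * M p j := by
            rw [Finset.mul_sum]
            exact Finset.sum_congr rfl (fun j _ => by ring)
          rw [e, hR (r i') p (by have := hrle i' hi'; omega) (by omega),
            if_neg (hrnp i'), mul_zero]
        rw [h2] at h1
        rwa [if_neg (by omega)]
      · -- both bottom
        obtain ⟨m, rfl⟩ : ∃ m, i = t + m := ⟨i - t, by omega⟩
        obtain ⟨m', rfl⟩ : ∃ m', i' = t + m' := ⟨i' - t, by omega⟩
        set f1 : ℕ → ℝ := fun j => if j ≤ t then U (t+m) j * U (t+m') j else 0 with hf1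
        set f2 : ℕ → ℝ := fun j => if j ≤ t then 0 else U (t+m) j * U (t+m') j with hf2
        have hsplit : ∀ j, U (t+m) j * U (t+m') j = f1 j + f2 j := by
          intro j; simp only [hf1, hf2]; split_ifs <;> ring
        have hsf1 : HasSum f1 (H m 0 * H m' 0) := by
          have hsupp : ∀ j, t+1 ≤ j → f1 j = 0 := fun j hj => by
            simp only [hf1]; rw [if_neg (by omega)]
          have h1 := hasSum_of_finite (t+1) _ hsupp
          have h2 : ∑ j ∈ range (t+1), f1 j = H m 0 * H m' 0 := by
            rw [Finset.sum_congr rfl (fun j hj => by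
              have hjt : j ≤ t := by have := mem_range.mp hj; omega
              simp only [hf1]
              rw [if_pos hjt, hUbot m j hjt, hUbot m' j hjt])]
            have e : ∑ j ∈ range (t+1), H m 0 * M p j * (H m' 0 * M p j)
                = (H m 0 * H m' 0) * ∑ j ∈ range (t+1), M p j * M p j := by
              rw [Finset.mul_sum]
              exact Finset.sum_congr rfl (fun j _ => by ring)
            rw [e, hR p p (by omega) (by omega), if_pos rfl, mul_one]
          rwa [h2] at h1
        have hsf2 : HasSum f2 ((if m = m' then (1:ℝ) else 0) - H m 0 * H m' 0) := by
          have hshift : HasSum (fun l => H m (l+1) * H m' (l+1))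
              ((if m = m' then (1:ℝ) else 0) - ∑ l ∈ range 1, H m l * H m' l) :=
            (hasSum_nat_add_iff' 1).mpr (hHrow m m')
          have h2 : HasSum (fun n => f2 (n + (t+1)))
              ((if m = m' then (1:ℝ) else 0) - H m 0 * H m' 0) := by
            have heq : (fun n => f2 (n + (t+1))) = fun n => H m (n+1) * H m' (n+1) := by
              funext n
              simp only [hf2]
              rw [if_neg (by omega), hUbot2 m (n+(t+1)) (by omega),
                hUbot2 m' (n+(t+1)) (by omega)]
              congr 2 <;> omega
            rw [heq]
            simpa using hshift
          have h3 := (hasSum_nat_add_iff (t+1)).mp h2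
          have h4 : ∑ j ∈ range (t+1), f2 j = 0 :=
            Finset.sum_eq_zero (fun j hj => by
              simp only [hf2]; rw [if_pos (by have := mem_range.mp hj; omega)])
          rwa [h4, add_zero] at h3
        have hadd := hsf1.add hsf2
        rw [show (fun j => f1 j + f2 j) = fun j => U (t+m) j * U (t+m') j from
          funext (fun j => (hsplit j).symm)] at hadd
        have hval : H m 0 * H m' 0 + ((if m = m' then (1:ℝ) else 0) - H m 0 * H m' 0)
            = (if t+m = t+m' then (1:ℝ) else 0) := by
          by_cases hmm : m = m'
          · rw [if_pos hmm, if_pos (by omega)]; ring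
          · rw [if_neg hmm, if_neg (by omega)]; ring
        rwa [hval] at hadd
  · -- columns
    intro j j'
    by_cases hj : j ≤ t
    · by_cases hj' : j' ≤ t
      · set f1 : ℕ → ℝ := fun i => if i < t then U i j * U i j' else 0 with hf1
        set f2 : ℕ → ℝ := fun i => if i < t then 0 else U i j * U i j' with hf2
        have hsplit : ∀ i, U i j * U i j' = f1 i + f2 i := by
          intro i; simp only [hf1, hf2]; split_ifs <;> ring
        have hsf1 : HasSum f1 (∑ i ∈ range t, M (r i) j * M (r i) j') := by
          have hsupp : ∀ i, t ≤ i → f1 i = 0 := fun i hi => by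
            simp only [hf1]; rw [if_neg (by omega)]
          have h1 := hasSum_of_finite t _ hsupp
          have h2 : ∑ i ∈ range t, f1 i = ∑ i ∈ range t, M (r i) j * M (r i) j' :=
            Finset.sum_congr rfl (fun i hi => by
              have hit := mem_range.mp hi
              simp only [hf1]
              rw [if_pos hit, hUtop i j hit hj, hUtop i j' hit hj'])
          rwa [h2] at h1
        have hsf2 : HasSum f2 (M p j * M p j') := by
          have h2 : HasSum (fun n => f2 (n + t)) (M p j * M p j') := by
            have heq : (fun n => f2 (n + t)) = fun n => (M p j * M p j') * (H n 0 * H n 0) := by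
              funext n
              simp only [hf2]
              rw [if_neg (by omega), show n + t = t + n by omega, hUbot n j hj, hUbot n j' hj']
              ring
            rw [heq]
            simpa using hw1.mul_left (M p j * M p j')
          have h3 := (hasSum_nat_add_iff t).mp h2
          have h4 : ∑ i ∈ range t, f2 i = 0 :=
            Finset.sum_eq_zero (fun i hi => by
              simp only [hf2]; rw [if_pos (mem_range.mp hi)])
          rwa [h4, add_zero] at h3
        have hadd := hsf1.add hsf2
        rw [show (fun i => f1 i + f2 i) = fun i => U i j * U i j' from
          funext (fun i => (hsplit i).symm)] at hadd
        have hval : (∑ i ∈ range t, M (r i) j * M (r i) j') + M p j * M p j'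
            = (if j = j' then (1:ℝ) else 0) := by
          have := sum_reindex t p hpt (fun a => M a j * M a j')
          simp only [← hrv] at this
          rw [this, hC j j' (by omega) (by omega)]
        rwa [hval] at hadd
      · -- j ≤ t < j'
        have hz : ∀ i, i < t → U i j * U i j' = 0 := fun i hi => by
          rw [hUtopz i j' hi (by omega), mul_zero]
        have h2 : HasSum (fun n => U (n+t) j * U (n+t) j') 0 := by
          have heq : (fun n => U (n+t) j * U (n+t) j')
              = fun n => M p j * (H n 0 * H n (j'-t)) := by
            funext n
            rw [show n + t = t + n by omega, hUbot n j hj, hUbot2 n j' (by omega)]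
            ring
          rw [heq]
          have := (hHcol 0 (j'-t)).mul_left (M p j)
          rwa [if_neg (by omega), mul_zero] at this
        have h3 := (hasSum_nat_add_iff (f := fun i => U i j * U i j') t).mp h2
        have h4 : ∑ i ∈ range t, U i j * U i j' = 0 :=
          Finset.sum_eq_zero (fun i hi => hz i (mem_range.mp hi))
        rw [h4, zero_add] at h3
        rwa [if_neg (by omega)]
    · by_cases hj' : j' ≤ t
      · -- j' ≤ t < j
        have h2 : HasSum (fun n => U (n+t) j * U (n+t) j') 0 := by
          have heq : (fun n => U (n+t) j * U (n+t) j')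
              = fun n => M p j' * (H n 0 * H n (j-t)) := by
            funext n
            rw [show n + t = t + n by omega, hUbot n j' hj', hUbot2 n j (by omega)]
            ring
          rw [heq]
          have := (hHcol 0 (j-t)).mul_left (M p j')
          rwa [if_neg (by omega), mul_zero] at this
        have h3 := (hasSum_nat_add_iff (f := fun i => U i j * U i j') t).mp h2
        have h4 : ∑ i ∈ range t, U i j * U i j' = 0 :=
          Finset.sum_eq_zero (fun i hi => by
            rw [hUtopz i j (mem_range.mp hi) (by omega), zero_mul])
        rw [h4, zero_add] at h3
        rwa [if_neg (by omega)]
      · -- both > t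
        have h2 : HasSum (fun n => U (n+t) j * U (n+t) j') (if j = j' then 1 else 0) := by
          have heq : (fun n => U (n+t) j * U (n+t) j')
              = fun n => H n (j-t) * H n (j'-t) := by
            funext n
            rw [show n + t = t + n by omega, hUbot2 n j (by omega), hUbot2 n j' (by omega)]
          rw [heq]
          have hvv : (if j = j' then (1:ℝ) else 0) = (if j - t = j' - t then (1:ℝ) else 0) := by
            by_cases hjj : j = j'
            · rw [if_pos hjj, if_pos (by omega)]
            · rw [if_neg hjj, if_neg (by omega)]
          rw [hvv]
          exact hHcol (j-t) (j'-t)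
        have h3 := (hasSum_nat_add_iff (f := fun i => U i j * U i j') t).mp h2
        have h4 : ∑ i ∈ range t, U i j * U i j' = 0 :=
          Finset.sum_eq_zero (fun i hi => by
            rw [hUtopz i j (mem_range.mp hi) (by omega), zero_mul])
        rwa [h4, add_zero] at h3
  · -- diagonal
    intro i
    by_cases hi : i < t
    · have hsupp : ∀ j, t+1 ≤ j → U i j ^ 2 * η j = 0 := fun j hj => by
        rw [hUtopz i j hi (by omega)]; ring
      have h1 := hasSum_of_finite (t+1) _ hsupp
      have h2 : ∑ j ∈ range (t+1), U i j ^ 2 * η j = ξ i := by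
        rw [Finset.sum_congr rfl (fun j hj => by
          rw [hUtop i j hi (by have := mem_range.mp hj; omega)]),
          hD (r i) (by have := hrle i hi; omega)]
        rw [hrv]
        split_ifs with hip
        · exact hd1 i hip
        · exact hd2 i (by omega) hi
      rwa [h2] at h1
    · obtain ⟨m, rfl⟩ : ∃ m, i = t + m := ⟨i - t, by omega⟩
      have hsupp : ∀ j, t+1 ≤ j → U (t+m) j ^ 2 * η j = 0 := fun j hj => by
        rw [hηs j hj]; ring
      have h1 := hasSum_of_finite (t+1) _ hsupp
      have h2 : ∑ j ∈ range (t+1), U (t+m) j ^ 2 * η j = ξ (t+m) := by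
        rw [Finset.sum_congr rfl (fun j hj => by
          rw [hUbot m j (by have := mem_range.mp hj; omega)])]
        have e : ∑ j ∈ range (t+1), (H m 0 * M p j) ^ 2 * η j
            = (H m 0)^2 * ∑ j ∈ range (t+1), (M p j)^2 * η j := by
          rw [Finset.mul_sum]
          exact Finset.sum_congr rfl (fun j _ => by ring)
        rw [e, hD p (by omega)]
        exact hd3 m
      rwa [h2] at h1


lemma sum_stab (f : ℕ → ℝ) (N n : ℕ) (h : N ≤ n) (hs : ∀ j, N ≤ j → f j = 0) :
    ∑ j ∈ range n, f j = ∑ j ∈ range N, f j := by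
  rw [show n = N + (n - N) by omega, Finset.sum_range_add,
    Finset.sum_eq_zero (fun x _ => hs (N + x) (by omega)), add_zero]

lemma smaj_hasSum (ξ η : ℕ → ℝ) (hξ0 : ∀ n, 0 ≤ ξ n) (hη0 : ∀ n, 0 ≤ η n)
    (hmaj : ∀ n : ℕ, ∑ j ∈ range n, ξ j ≤ ∑ j ∈ range n, η j)
    (hlim : liminf (fun n => ((∑ j ∈ range n, (η j - ξ j) : ℝ) : EReal)) atTop = 0)
    (N : ℕ) (hηs : ∀ n, N ≤ n → η n = 0) :
    HasSum ξ (∑ j ∈ range N, η j) := by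
  set S := ∑ j ∈ range N, η j with hS
  have hstab : ∀ n, N ≤ n → ∑ j ∈ range n, η j = S := fun n hn => sum_stab η N n hn hηs
  have hble : ∀ n, ∑ j ∈ range n, ξ j ≤ S := by
    intro n
    rcases le_or_gt n N with hn | hn
    · refine le_trans (hmaj n) ?_
      rw [hS]
      exact Finset.sum_le_sum_of_subset_of_nonneg (Finset.range_subset_range.mpr hn)
        (fun j _ _ => hη0 j)
    · rw [← hstab n hn.le]; exact hmaj n
  obtain ⟨A, hA⟩ := summable_of_sum_range_le hξ0 hble
  have htend := hA.tendsto_sum_nat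
  have h1 : Tendsto (fun n => ∑ j ∈ range n, η j) atTop (nhds S) :=
    tendsto_atTop_of_eventually_const (i₀ := N) (fun n hn => hstab n hn)
  have h2 : Tendsto (fun n => ∑ j ∈ range n, (η j - ξ j)) atTop (nhds (S - A)) := by
    have h := h1.sub htend
    have heq : (fun n => ∑ j ∈ range n, (η j - ξ j))
        = fun n => (∑ j ∈ range n, η j) - ∑ j ∈ range n, ξ j :=
      funext (fun n => Finset.sum_sub_distrib _ _)
    rw [heq]; exact h
  have h3 : Tendsto (fun n => ((∑ j ∈ range n, (η j - ξ j) : ℝ) : EReal)) atTop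
      (nhds ((S - A : ℝ) : EReal)) :=
    (continuous_coe_real_ereal.tendsto _).comp h2
  have h4 := h3.liminf_eq
  rw [hlim] at h4
  have h6 : S - A = 0 := by exact_mod_cast h4.symm
  have h7 : A = S := by linarith
  rwa [h7] at hA

/-- If `ξ, η ∈ c₀*`, `ξ ≼ η`, and `η` has finite support, then
`ξ = Qη` for some orthostochastic matrix `Q`. -/
theorem stmt_2 (ξ η : ℕ → ℝ) (hξ : IsCoStar ξ) (hη : IsCoStar η)
    (hmaj : SMaj ξ η) (hfin : ∃ N : ℕ, ∀ n, N ≤ n → η n = 0) :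
    ∃ Q : ℕ → ℕ → ℝ, Orthostochastic Q ∧
      ∀ i, HasSum (fun j => Q i j * η j) (ξ i) := by
  obtain ⟨hξ0, hξa, hξt⟩ := hξ
  obtain ⟨hη0, hηa, hηt⟩ := hη
  obtain ⟨hmaj, hlim⟩ := hmaj
  obtain ⟨N, hηs⟩ := hfin
  set S := ∑ j ∈ range N, η j with hS
  have hsum : HasSum ξ S := smaj_hasSum ξ η hξ0 hη0 hmaj hlim N hηs
  suffices h : ∃ U, OrthogonalMatrix U ∧ ∀ i, HasSum (fun j => U i j ^ 2 * η j) (ξ i) by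
    obtain ⟨U, hU, hdiag⟩ := h
    exact ⟨fun i j => U i j ^ 2, ⟨U, hU, fun _ _ => rfl⟩, fun i => hdiag i⟩
  by_cases hfinξ : ∃ T, ∀ i, T ≤ i → ξ i = 0
  · -- ξ has finite support
    obtain ⟨T, hT⟩ := hfinξ
    set L := max T N with hL
    have hξs' : ∀ i, L ≤ i → ξ i = 0 := fun i hi => hT i (le_trans (le_max_left T N) hi)
    have hηs' : ∀ j, L ≤ j → η j = 0 := fun j hj => hηs j (le_trans (le_max_right T N) hj)
    have h1 : HasSum ξ (∑ i ∈ range L, ξ i) := hasSum_of_finite L ξ hξs'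
    have h3 : ∑ i ∈ range L, ξ i = S := h1.unique hsum
    have h2 : ∑ j ∈ range L, η j = S := by
      rw [sum_stab η N L (le_max_right T N) hηs]
    have hsumL : ∑ i ∈ range L, ξ i = ∑ j ∈ range L, η j := by rw [h3, h2]
    obtain ⟨M, hR, hC, hD⟩ := horn L ξ η hξ0 hξa hη0 hηa hξs' hηs' hmaj hsumL
    exact pad L ξ η M hR hC hD hξs' hηs'
  · -- ξ has infinite support
    push_neg at hfinξ
    have hξpos : ∀ i, 0 < ξ i := by
      intro i
      rcases (hξ0 i).lt_or_eq with h | h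
      · exact h
      · exfalso
        obtain ⟨i', hi', hne⟩ := hfinξ i
        exact hne (le_antisymm (h ▸ hξa hi') (hξ0 i'))
    have hSpos : 0 < S := lt_of_lt_of_le (hξpos 0) (le_hasSum hsum 0 (fun j _ => hξ0 j))
    have hex0 : ∃ j, η j = 0 := ⟨N, hηs N le_rfl⟩
    set s := Nat.find hex0 with hsdef
    have hs0 : η s = 0 := Nat.find_spec hex0
    have hηz : ∀ j, s ≤ j → η j = 0 := fun j hj => le_antisymm (hs0 ▸ hηa hj) (hη0 j)
    have hsN : s ≤ N := Nat.find_le (hηs N le_rfl)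
    have hstab : ∀ n, s ≤ n → ∑ j ∈ range n, η j = S := by
      intro n hn
      have h1 := sum_stab η s N hsN hηz
      rw [sum_stab η s n hn hηz, ← h1]
    have hspos : 0 < s := by
      rcases Nat.eq_zero_or_pos s with h0 | h
      · exfalso
        have h' := hstab 0 (by omega)
        simp only [range_zero, Finset.sum_empty] at h'
        linarith
      · exact h
    have hεpos : 0 < η (s-1) := by
      have hne : η (s-1) ≠ 0 := Nat.find_min hex0 (by omega)
      exact lt_of_le_of_ne (hη0 _) (Ne.symm hne)
    have htendξ := hsum.tendsto_sum_nat
    obtain ⟨t, ht1, ht2⟩ : ∃ t, S - η (s-1) < ∑ i ∈ range t, ξ i ∧ s ≤ t := by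
      have hev1 := htendξ.eventually (eventually_gt_nhds (show S - η (s-1) < S by linarith))
      obtain ⟨t, h1, h2⟩ := (hev1.and (eventually_ge_atTop s)).exists
      exact ⟨t, h1, h2⟩
    set ρ := S - ∑ i ∈ range t, ξ i with hρ
    have hρε : ρ ≤ η (s-1) := by rw [hρ]; linarith
    have htail : HasSum (fun n => ξ (n + t)) ρ := by
      refine (hasSum_nat_add_iff (f := ξ) t).mpr ?_
      rw [show ρ + ∑ i ∈ range t, ξ i = S by rw [hρ]; ring]
      exact hsum
    have hρpos : 0 < ρ := by
      have h0 : ξ (0 + t) ≤ ρ := le_hasSum htail 0 (fun j _ => hξ0 _)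
      have h1 := hξpos (0 + t)
      linarith
    have hξtρ : ξ t < ρ := by
      have htail1 : HasSum (fun n => ξ (n + 1 + t)) (ρ - ∑ i ∈ range 1, ξ (i + t)) :=
        (hasSum_nat_add_iff' (f := fun n => ξ (n + t)) 1).mpr htail
      have h0 : ξ (0 + 1 + t) ≤ ρ - ∑ i ∈ range 1, ξ (i + t) :=
        le_hasSum htail1 0 (fun j _ => hξ0 _)
      have h1 : ∑ i ∈ range 1, ξ (i + t) = ξ (0 + t) := by
        rw [Finset.sum_range_one]
      rw [h1] at h0
      have h2 := hξpos (0 + 1 + t)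
      have h3 : ξ (0 + t) = ξ t := by congr 1; omega
      rw [h3] at h0
      linarith
    have hpex : ∃ i, ξ i ≤ ρ := by
      obtain ⟨i, hi⟩ := (hξt.eventually (eventually_lt_nhds hρpos)).exists
      exact ⟨i, hi.le⟩
    set p := min (Nat.find hpex) t with hp
    have hpt : p ≤ t := min_le_right _ _
    have hplt : ∀ i, i < p → ρ < ξ i := fun i hi =>
      lt_of_not_ge (Nat.find_min hpex (by omega))
    have hpv : p < t → ξ p ≤ ρ := by
      intro h
      have he : p = Nat.find hpex := by omega
      rw [he]
      exact Nat.find_spec hpex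
    set ζ : ℕ → ℝ := fun i =>
      if i < p then ξ i else if i = p then ρ else if i ≤ t then ξ (i-1) else 0 with hζ
    have hζlt : ∀ i, i < p → ζ i = ξ i := fun i hi => by simp only [hζ]; rw [if_pos hi]
    have hζp : ζ p = ρ := by simp [hζ]
    have hζmid : ∀ i, p < i → i ≤ t → ζ i = ξ (i-1) := fun i h1 h2 => by
      simp only [hζ]; rw [if_neg (by omega), if_neg (by omega), if_pos h2]
    have hζhi : ∀ i, t < i → ζ i = 0 := fun i hi => by
      simp only [hζ]; rw [if_neg (by omega), if_neg (by omega), if_neg (by omega)]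
    have hζ0 : ∀ i, 0 ≤ ζ i := by
      intro i
      rcases lt_trichotomy i p with h | heq | h
      · rw [hζlt i h]; exact hξ0 i
      · rw [heq, hζp]; exact hρpos.le
      · rcases le_or_gt i t with h2 | h2
        · rw [hζmid i h h2]; exact hξ0 _
        · rw [hζhi i h2]
    have hζa : Antitone ζ := by
      apply antitone_nat_of_succ_le
      intro n
      rcases lt_trichotomy (n+1) p with h | heq | h
      · rw [hζlt (n+1) h, hζlt n (by omega)]; exact hξa (by omega)
      · rw [heq, hζp, hζlt n (by omega)]
        exact (hplt n (by omega)).le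
      · rcases lt_trichotomy n p with h2 | heq2 | h2
        · exfalso; omega
        · rw [heq2]
          rcases le_or_gt (p+1) t with h3 | h3
          · rw [hζmid (p+1) (by omega) h3, hζp]
            have h4 := hpv (by omega)
            have h5 : p + 1 - 1 = p := by omega
            rw [h5]
            exact h4
          · rw [hζhi (p+1) (by omega), hζp]; exact hρpos.le
        · rcases le_or_gt (n+1) t with h3 | h3
          · rw [hζmid (n+1) (by omega) h3, hζmid n (by omega) (by omega)]
            exact hξa (by omega)
          · rcases le_or_gt n t with h4 | h4
            · rw [hζhi (n+1) (by omega), hζmid n (by omega) h4]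
              exact hξ0 _
            · rw [hζhi (n+1) (by omega), hζhi n (by omega)]
    have hζs : ∀ i, t+1 ≤ i → ζ i = 0 := fun i hi => hζhi i (by omega)
    have hηts : ∀ j, t+1 ≤ j → η j = 0 := fun j hj => hηz j (by omega)
    have hins : ∀ n, p ≤ n → n ≤ t → ∑ i ∈ range (n+1), ζ i = ∑ i ∈ range n, ξ i + ρ := by
      intro n h1 h2
      have e1 : n + 1 = (p + 1) + (n - p) := by omega
      rw [e1, Finset.sum_range_add, Finset.sum_range_succ]
      have e2 : ∑ i ∈ range p, ζ i = ∑ i ∈ range p, ξ i :=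
        Finset.sum_congr rfl (fun i hi => hζlt i (mem_range.mp hi))
      have e3 : ∑ x ∈ range (n - p), ζ (p + 1 + x) = ∑ x ∈ range (n - p), ξ (p + x) :=
        Finset.sum_congr rfl (fun x hx => by
          have hx' := mem_range.mp hx
          rw [hζmid (p+1+x) (by omega) (by omega)]
          congr 1; omega)
      have e4 : ∑ i ∈ range n, ξ i = ∑ i ∈ range p, ξ i + ∑ x ∈ range (n - p), ξ (p + x) := by
        nth_rewrite 1 [show n = p + (n - p) by omega]
        rw [Finset.sum_range_add]
      rw [e2, e3, hζp, e4]; ring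
    have hmajζ : ∀ n, ∑ i ∈ range n, ζ i ≤ ∑ i ∈ range n, η i := by
      intro n
      rcases le_or_gt n p with hn | hn
      · have he : ∑ i ∈ range n, ζ i = ∑ i ∈ range n, ξ i :=
          Finset.sum_congr rfl (fun i hi => hζlt i (by have := mem_range.mp hi; omega))
        rw [he]; exact hmaj n
      · rcases le_or_gt n (t+1) with hn2 | hn2
        · obtain ⟨n', rfl⟩ : ∃ n', n = n' + 1 := ⟨n - 1, by omega⟩
          rw [hins n' (by omega) (by omega)]
          rcases le_or_gt (n'+1) s with hns | hns
          · have hη1 : ρ ≤ η n' := le_trans hρε (hηa (by omega))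
            have h5 := hmaj n'
            rw [Finset.sum_range_succ]
            linarith
          · rw [hstab (n'+1) (by omega)]
            have hmono : ∑ i ∈ range n', ξ i ≤ ∑ i ∈ range t, ξ i :=
              Finset.sum_le_sum_of_subset_of_nonneg (Finset.range_subset_range.mpr (by omega))
                (fun j _ _ => hξ0 j)
            have h6 : ρ = S - ∑ i ∈ range t, ξ i := hρ
            linarith
        · have e5 : ∑ i ∈ range n, ζ i = ∑ i ∈ range (t+1), ζ i :=
            sum_stab ζ (t+1) n (by omega) hζs
          rw [e5, hins t hpt le_rfl, hstab n (by omega)]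
          have h6 : ρ = S - ∑ i ∈ range t, ξ i := hρ
          linarith
    have hsumζ : ∑ i ∈ range (t+1), ζ i = ∑ j ∈ range (t+1), η j := by
      rw [hins t hpt le_rfl, hstab (t+1) (by omega)]
      have h6 : ρ = S - ∑ i ∈ range t, ξ i := hρ
      linarith
    obtain ⟨M, hR, hC, hD⟩ := horn (t+1) ζ η hζ0 hζa hη0 hηa hζs hηts hmajζ hsumζ
    set w : ℕ → ℝ := fun m => Real.sqrt (ξ (t + m) / ρ) with hw
    have hwv : ∀ m, w m = Real.sqrt (ξ (t + m) / ρ) := fun _ => rfl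
    have hwsq : ∀ m, w m ^ 2 = ξ (t+m) / ρ := fun m => by
      rw [hwv]; exact Real.sq_sqrt (div_nonneg (hξ0 _) hρpos.le)
    have hwsum : HasSum (fun m => w m ^ 2) 1 := by
      have h1 : HasSum (fun n => ξ (n + t) / ρ) 1 := by
        have h2 := htail.div_const ρ
        rwa [div_self hρpos.ne'] at h2
      have heq : (fun m => w m ^ 2) = fun n => ξ (n + t) / ρ := by
        funext m
        rw [hwsq m, show t + m = m + t from by omega]
      rw [heq]; exact h1
    have hw0 : w 0 < 1 := by
      rw [hwv, show t + 0 = t from by omega,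
        show (1:ℝ) = Real.sqrt 1 from (Real.sqrt_one).symm]
      apply Real.sqrt_lt_sqrt (div_nonneg (hξ0 _) hρpos.le)
      rw [div_lt_one hρpos]
      linarith
    obtain ⟨H, hH0, hHrow, hHcol⟩ := householder w hwsum hw0
    refine expand t p hpt ξ η ζ M H hR hC hD hHrow hHcol hηts ?_ ?_ ?_
    · exact fun i hi => hζlt i hi
    · intro i h1 h2
      rw [hζmid (i+1) (by omega) (by omega)]
      congr 1 <;> omega
    · intro m
      rw [hH0 m, hwsq m, hζp]
      rw [div_mul_cancel₀ _ hρpos.ne']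

end
end

section
/- Let P be a substochastic matrix and let η ∈ c₀* with η_n > 0 for all n. If liminf_{n→∞} ∑_{i=1}^n (η_i − (Pη)_i) = 0, then P is column-stochastic, i.e., ∑_{i=1}^∞ P_{ij} = 1 for every j. -/
noncomputable section

open Filter Finset

/-- A matrix (indexed by `ℕ × ℕ`) is substochastic if its entries are nonnegative and
all of its row sums and column sums are bounded by `1`. -/
def Substochastic (P : ℕ → ℕ → ℝ) : Prop :=
  (∀ i j, 0 ≤ P i j) ∧
  (∀ i, ∀ s : Finset ℕ, ∑ j ∈ s, P i j ≤ 1) ∧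
  (∀ j, ∀ s : Finset ℕ, ∑ i ∈ s, P i j ≤ 1)

/-- If `P` is substochastic, `η ∈ c₀*` with `η_n > 0` for all `n`, and
`liminf_n ∑_{i<n} (η_i − (Pη)_i) = 0`, then `P` is column-stochastic. -/
theorem stmt_3 (P : ℕ → ℕ → ℝ) (hP : Substochastic P)
    (η : ℕ → ℝ) (hη : IsCoStar η) (hpos : ∀ n, 0 < η n)
    (h : liminf
        (fun n => ((∑ i ∈ range n, (η i - ∑' j, P i j * η j) : ℝ) : EReal)) atTop = 0) :
    ∀ j, HasSum (fun i => P i j) (1 : ℝ) := by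
  obtain ⟨hPnn, hrow, hcol⟩ := hP
  obtain ⟨hηnn, hanti, hlim⟩ := hη
  -- each column is summable
  have hcolsum : ∀ j, Summable (fun i => P i j) := by
    intro j
    exact summable_of_sum_range_le (fun i => hPnn i j) (fun n => hcol j (range n))
  have hcolle : ∀ j, ∑' i, P i j ≤ 1 := by
    intro j
    exact Summable.tsum_le_of_sum_le (hcolsum j) (hcol j)
  -- rows times η are summable
  have hA : ∀ i, Summable (fun j => P i j * η j) := by
    intro i
    refine summable_of_sum_range_le (c := η 0) (fun j => mul_nonneg (hPnn i j) (hηnn j)) (fun n => ?_)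
    calc ∑ j ∈ range n, P i j * η j ≤ ∑ j ∈ range n, P i j * η 0 := by
          refine Finset.sum_le_sum (fun j _ => ?_)
          exact mul_le_mul_of_nonneg_left (hanti (Nat.zero_le j)) (hPnn i j)
      _ = (∑ j ∈ range n, P i j) * η 0 := by rw [Finset.sum_mul]
      _ ≤ 1 * η 0 := mul_le_mul_of_nonneg_right (hrow i (range n)) (hηnn 0)
      _ = η 0 := one_mul _
  intro j0
  have key : ∑' i, P i j0 = 1 := by
    by_contra hne
    have hs : ∑' i, P i j0 < 1 := lt_of_le_of_ne (hcolle j0) hne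
    set s := ∑' i, P i j0 with hs_def
    -- the main estimate
    have keyineq : ∀ n, j0 < n →
        (1 - s) * (η j0 - η n) ≤ ∑ i ∈ range n, (η i - ∑' j, P i j * η j) := by
      intro n hn
      set c : ℕ → ℝ := fun j => ∑ i ∈ range n, P i j with hc_def
      have hc_nonneg : ∀ j, 0 ≤ c j := fun j =>
        Finset.sum_nonneg (fun i _ => hPnn i j)
      have hc_le_one : ∀ j, c j ≤ 1 := fun j => hcol j (range n)
      have hg_sum : Summable (fun j => c j * η j) := by
        have := summable_sum (s := range n)
          (f := fun i j => P i j * η j) (fun i _ => hA i)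
        convert this using 2 with j
        rw [hc_def, Finset.sum_mul]
      -- swap sums
      have hswap : ∑ i ∈ range n, ∑' j, P i j * η j = ∑' j, c j * η j := by
        rw [← Summable.tsum_finsetSum (fun i (_ : i ∈ range n) => hA i)]
        congr 1
        ext j
        rw [hc_def, Finset.sum_mul]
      -- split the tsum
      have hsplit : ∑ j ∈ range n, c j * η j + ∑' j, c (j + n) * η (j + n)
          = ∑' j, c j * η j := Summable.sum_add_tsum_nat_add n hg_sum
      -- tail sum bound
      set C := ∑ j ∈ range n, c j with hC_def
      have htailmass : ∀ t : Finset ℕ, ∑ j ∈ t, c (j + n) ≤ (n : ℝ) - C := by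
        intro t
        have hper : ∀ i, ∑ j ∈ range n, P i j + ∑ j ∈ t, P i (j + n) ≤ 1 := by
          intro i
          have himg : ∑ j ∈ t, P i (j + n) = ∑ j ∈ t.image (· + n), P i j := by
            rw [Finset.sum_image]
            intro a _ b _ hab
            simp only at hab
            omega
          have hdisj : Disjoint (range n) (t.image (· + n)) := by
            rw [Finset.disjoint_left]
            intro a ha hb
            simp only [Finset.mem_range] at ha
            simp only [Finset.mem_image] at hb
            omega
          rw [himg, ← Finset.sum_union hdisj]
          exact hrow i _
        have : C + ∑ j ∈ t, c (j + n) ≤ (n : ℝ) := by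
          have : C + ∑ j ∈ t, c (j + n)
              = ∑ i ∈ range n, (∑ j ∈ range n, P i j + ∑ j ∈ t, P i (j + n)) := by
            rw [Finset.sum_add_distrib, hC_def, hc_def]
            rw [Finset.sum_comm (s := range n) (t := range n),
              Finset.sum_comm (s := t) (t := range n)]
          rw [this]
          calc ∑ i ∈ range n, (∑ j ∈ range n, P i j + ∑ j ∈ t, P i (j + n))
              ≤ ∑ _i ∈ range n, (1 : ℝ) := Finset.sum_le_sum (fun i _ => hper i)
            _ = (n : ℝ) := by simp
        linarith
      have htail_summable : Summable (fun j => c (j + n) * η (j + n)) :=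
        (summable_nat_add_iff n).mpr hg_sum
      have htail : ∑' j, c (j + n) * η (j + n) ≤ η n * ((n : ℝ) - C) := by
        refine Summable.tsum_le_of_sum_le htail_summable (fun t => ?_)
        calc ∑ j ∈ t, c (j + n) * η (j + n)
            ≤ ∑ j ∈ t, c (j + n) * η n := by
              refine Finset.sum_le_sum (fun j _ => ?_)
              exact mul_le_mul_of_nonneg_left (hanti (Nat.le_add_left n j)) (hc_nonneg _)
          _ = (∑ j ∈ t, c (j + n)) * η n := by rw [Finset.sum_mul]
          _ ≤ ((n : ℝ) - C) * η n :=
              mul_le_mul_of_nonneg_right (htailmass t) (hηnn n)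
          _ = η n * ((n : ℝ) - C) := mul_comm _ _
      -- putting it together
      have hmain : ∑ j ∈ range n, (1 - c j) * (η j - η n)
          ≤ ∑ i ∈ range n, (η i - ∑' j, P i j * η j) := by
        have e1 : ∑ i ∈ range n, (η i - ∑' j, P i j * η j)
            = ∑ i ∈ range n, η i - ∑' j, c j * η j := by
          rw [Finset.sum_sub_distrib, hswap]
        have e2 : ∑ j ∈ range n, (1 - c j) * (η j - η n)
            = ∑ j ∈ range n, η j - ∑ j ∈ range n, c j * η j - η n * ((n : ℝ) - C) := by
          have hcard : ∑ _j ∈ range n, (1 : ℝ) = (n : ℝ) := by simp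
          have hmulsum : ∑ j ∈ range n, η n * (1 - c j) = η n * ((n : ℝ) - C) := by
            rw [← Finset.mul_sum, Finset.sum_sub_distrib, hcard, hC_def]
          rw [← hmulsum, ← Finset.sum_sub_distrib, ← Finset.sum_sub_distrib]
          refine Finset.sum_congr rfl (fun j _ => by ring)
        rw [e1, e2, ← hsplit]
        linarith
      have hsingle : (1 - c j0) * (η j0 - η n) ≤ ∑ j ∈ range n, (1 - c j) * (η j - η n) := by
        refine Finset.single_le_sum (f := fun j => (1 - c j) * (η j - η n)) (fun j hj => ?_)
          (Finset.mem_range.mpr hn)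
        refine mul_nonneg (by linarith [hc_le_one j]) ?_
        simp only [Finset.mem_range] at hj
        linarith [hanti (le_of_lt hj)]
      have hcs : c j0 ≤ s := by
        rw [hs_def, hc_def]
        exact Summable.sum_le_tsum (range n) (fun i _ => hPnn i j0) (hcolsum j0)
      have : (1 - s) * (η j0 - η n) ≤ (1 - c j0) * (η j0 - η n) := by
        refine mul_le_mul_of_nonneg_right (by linarith) ?_
        linarith [hanti (le_of_lt hn)]
      linarith
    -- now derive a contradiction using the liminf
    set a : ℝ := (1 - s) * (η j0 / 2) with ha_def
    have ha_pos : 0 < a := mul_pos (by linarith) (half_pos (hpos j0))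
    have hev : ∀ᶠ n in atTop, (a : EReal)
        ≤ ((∑ i ∈ range n, (η i - ∑' j, P i j * η j) : ℝ) : EReal) := by
      have h1 : ∀ᶠ n in atTop, η n < η j0 / 2 :=
        hlim.eventually_lt_const (half_pos (hpos j0))
      have h2 : ∀ᶠ n in atTop, j0 < n := eventually_gt_atTop j0
      filter_upwards [h1, h2] with n hn1 hn2
      have : a ≤ ∑ i ∈ range n, (η i - ∑' j, P i j * η j) := by
        have := keyineq n hn2
        have : (1 - s) * (η j0 / 2) ≤ (1 - s) * (η j0 - η n) := by
          refine mul_le_mul_of_nonneg_left (by linarith) (by linarith)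
        linarith [keyineq n hn2]
      exact_mod_cast this
    have : (a : EReal) ≤ 0 := by
      rw [← h]
      exact le_liminf_of_le (by isBoundedDefault) hev
    have : a ≤ 0 := by exact_mod_cast this
    linarith
  rw [← key]
  exact (hcolsum j0).hasSum

end
end

section
/- Let ξ, η ∈ c₀* and suppose ξ = Pη for some column-stochastic matrix P. If ξ is summable or η is summable, then both are summable, ∑_{j=1}^∞ ξ_j = ∑_{j=1}^∞ η_j, and ξ ≼ η. -/
noncomputable section

open Filter Finset

lemma summable_iff_ofReal {f : ℕ → ℝ} (hf : ∀ n, 0 ≤ f n) :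
    Summable f ↔ ∑' n, ENNReal.ofReal (f n) ≠ ⊤ := by
  have h1 : ∀ n, ENNReal.ofReal (f n) = ((f n).toNNReal : ENNReal) := fun n => rfl
  simp only [h1]
  rw [ENNReal.tsum_coe_ne_top_iff_summable]
  have h2 : (fun n => ((f n).toNNReal : ℝ)) = f := by
    ext n; exact Real.coe_toNNReal _ (hf n)
  constructor
  · intro h; rw [← NNReal.summable_coe, h2]; exact h
  · intro h; rw [← NNReal.summable_coe, h2] at h; exact h

lemma tsum_ofReal_eq {f : ℕ → ℝ} (hf : ∀ n, 0 ≤ f n) (hs : Summable f) :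
    ∑' n, ENNReal.ofReal (f n) = ENNReal.ofReal (∑' n, f n) :=
  (ENNReal.ofReal_tsum_of_nonneg hf hs).symm

/-- If `ξ, η ∈ c₀*` and `ξ = Pη` for a column-stochastic matrix `P`, then
summability of `ξ` or of `η` implies both are summable with equal sums and `ξ ≼ η`. -/
theorem stmt_4 (ξ η : ℕ → ℝ) (hξ : IsCoStar ξ) (hη : IsCoStar η)
    (P : ℕ → ℕ → ℝ) (hP : Substochastic P)
    (hcol : ∀ j, HasSum (fun i => P i j) (1 : ℝ))
    (heq : ∀ i, HasSum (fun j => P i j * η j) (ξ i))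
    (hsum : Summable ξ ∨ Summable η) :
    Summable ξ ∧ Summable η ∧ (∑' j, ξ j) = (∑' j, η j) ∧ SMaj ξ η := by
  obtain ⟨hξ0, hξa, _⟩ := hξ
  obtain ⟨hη0, hηa, _⟩ := hη
  obtain ⟨hP0, hProw, hPcol⟩ := hP
  have hrow_sum : ∀ i, Summable (fun j => P i j) := fun i =>
    summable_of_sum_range_le (fun j => hP0 i j) (fun n => hProw i (range n))
  have hrow_le : ∀ i, ∑' j, P i j ≤ 1 := fun i =>
    Summable.tsum_le_of_sum_le (hrow_sum i) (fun s => hProw i s)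
  -- Step 1: Maj ξ η
  have hmaj : Maj ξ η := by
    intro n
    set c : ℕ → ℝ := fun j => ∑ i ∈ range n, P i j with hc
    have hc0 : ∀ j, 0 ≤ c j := fun j => Finset.sum_nonneg fun i _ => hP0 i j
    have hc1 : ∀ j, c j ≤ 1 := fun j => hPcol j (range n)
    have hsumm_row : ∀ i ∈ range n, Summable (fun j => P i j * η j) :=
      fun i _ => (heq i).summable
    have hc_summ : Summable c := summable_sum (fun i _ => hrow_sum i)
    have hcη_eq : (fun j => c j * η j) = fun j => ∑ i ∈ range n, P i j * η j := by
      ext j; rw [hc]; exact Finset.sum_mul ..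
    have hcη_summ : Summable (fun j => c j * η j) := by
      rw [hcη_eq]; exact summable_sum hsumm_row
    have key : ∑ i ∈ range n, ξ i = ∑' j, c j * η j := by
      have h1 : ∀ i ∈ range n, ξ i = ∑' j, P i j * η j := fun i _ => (heq i).tsum_eq.symm
      rw [Finset.sum_congr rfl h1, ← Summable.tsum_finsetSum hsumm_row, ← hcη_eq]
    rw [key]
    have hc_tot : ∑' j, c j ≤ n := by
      rw [hc, Summable.tsum_finsetSum (fun i _ => hrow_sum i)]
      calc ∑ i ∈ range n, ∑' j, P i j ≤ ∑ i ∈ range n, (1 : ℝ) :=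
            Finset.sum_le_sum fun i _ => hrow_le i
        _ = n := by simp
    rw [← Summable.sum_add_tsum_nat_add (f := fun j => c j * η j) n hcη_summ]
    set T := ∑' k, c (k + n) with hT
    have hTval : ∑ j ∈ range n, c j + T = ∑' j, c j :=
      Summable.sum_add_tsum_nat_add n hc_summ
    have hT0 : 0 ≤ T := tsum_nonneg fun k => hc0 _
    have htail : ∑' k, c (k + n) * η (k + n) ≤ T * η n := by
      rw [hT, ← tsum_mul_right]
      exact Summable.tsum_le_tsum (fun k =>
          mul_le_mul_of_nonneg_left (hηa (Nat.le_add_left n k)) (hc0 _))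
        ((summable_nat_add_iff n).mpr hcη_summ)
        (((summable_nat_add_iff n).mpr hc_summ).mul_right _)
    have hTle : T ≤ n - ∑ j ∈ range n, c j := by linarith
    have h2 : ∑ j ∈ range n, c j * η j + T * η n ≤
        ∑ j ∈ range n, c j * η j + (n - ∑ j ∈ range n, c j) * η n := by
      have := mul_le_mul_of_nonneg_right hTle (hη0 n)
      linarith
    have h3 : ∑ j ∈ range n, c j * η j + (n - ∑ j ∈ range n, c j) * η n =
        ∑ j ∈ range n, (c j * η j + (1 - c j) * η n) := by
      rw [Finset.sum_add_distrib]
      congr 1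
      rw [← Finset.sum_mul]
      congr 1
      rw [Finset.sum_sub_distrib]
      simp
    have h4 : ∑ j ∈ range n, (c j * η j + (1 - c j) * η n) ≤ ∑ j ∈ range n, η j := by
      apply Finset.sum_le_sum
      intro j hj
      have hjn : η n ≤ η j := hηa (le_of_lt (mem_range.mp hj))
      nlinarith [hc0 j, hc1 j]
    linarith
  -- Step 2: ENNReal Tonelli
  have hA : ∀ i, ∑' j, ENNReal.ofReal (P i j * η j) = ENNReal.ofReal (ξ i) := fun i => by
    rw [tsum_ofReal_eq (fun j => mul_nonneg (hP0 i j) (hη0 j)) (heq i).summable,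
      (heq i).tsum_eq]
  have hB : ∀ j, ∑' i, ENNReal.ofReal (P i j * η j) = ENNReal.ofReal (η j) := fun j => by
    have : ∀ i, ENNReal.ofReal (P i j * η j)
        = ENNReal.ofReal (P i j) * ENNReal.ofReal (η j) :=
      fun i => ENNReal.ofReal_mul (hP0 i j)
    simp only [this]
    rw [ENNReal.tsum_mul_right,
      tsum_ofReal_eq (fun i => hP0 i j) (hcol j).summable, (hcol j).tsum_eq]
    simp
  have hkey : ∑' i, ENNReal.ofReal (ξ i) = ∑' j, ENNReal.ofReal (η j) := by
    calc ∑' i, ENNReal.ofReal (ξ i) = ∑' i, ∑' j, ENNReal.ofReal (P i j * η j) := by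
          simp only [hA]
      _ = ∑' j, ∑' i, ENNReal.ofReal (P i j * η j) := ENNReal.tsum_comm
      _ = ∑' j, ENNReal.ofReal (η j) := by simp only [hB]
  have hboth : Summable ξ ∧ Summable η := by
    rcases hsum with h | h
    · exact ⟨h, (summable_iff_ofReal hη0).mpr
        (hkey ▸ (summable_iff_ofReal hξ0).mp h)⟩
    · exact ⟨(summable_iff_ofReal hξ0).mpr
        (hkey.symm ▸ (summable_iff_ofReal hη0).mp h), h⟩
  obtain ⟨hξs, hηs⟩ := hboth
  have hsums : (∑' j, ξ j) = ∑' j, η j := by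
    have h1 : ENNReal.ofReal (∑' j, ξ j) = ENNReal.ofReal (∑' j, η j) := by
      rw [← tsum_ofReal_eq hξ0 hξs, ← tsum_ofReal_eq hη0 hηs, hkey]
    rwa [ENNReal.ofReal_eq_ofReal_iff (tsum_nonneg hξ0) (tsum_nonneg hη0)] at h1
  refine ⟨hξs, hηs, hsums, hmaj, ?_⟩
  have htend : Tendsto (fun n => ∑ j ∈ range n, (η j - ξ j)) atTop (nhds 0) := by
    have h := ((hηs.hasSum.sub hξs.hasSum)).tendsto_sum_nat
    rw [hsums, sub_self] at h
    exact h
  have : Tendsto (fun n => ((∑ j ∈ range n, (η j - ξ j) : ℝ) : EReal)) atTop (nhds 0) := by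
    have := EReal.tendsto_coe.mpr htend
    simpa using this
  exact this.liminf_eq

end
end

section
/- Let ω be the harmonic sequence, ω_n = 1/n. There exists an orthostochastic matrix Q such that the sequence Qω (with (Qω)_i = ∑_{j=1}^∞ Q_{ij} ω_j) is nonincreasing and liminf_{n→∞} ∑_{j=1}^n (ω_j − (Qω)_j) > 0; in particular Qω is majorized but not strongly majorized by ω. -/
noncomputable section

open Filter Finset

/-- The harmonic sequence `ω_n = 1/n` (here `0`-indexed: `ω n = 1/(n+1)`). -/
noncomputable def harmonic' (n : ℕ) : ℝ := 1 / (n + 1 : ℝ)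

namespace Stmt5



def tau (c : ℕ) : ℕ :=
  if c % 8 = 0 then 6*(c/8)
  else if c % 8 = 1 then 12*(c/8)+1
  else if c % 8 = 2 then 6*(c/8)+2
  else if c % 8 = 3 then 12*(c/8)+5
  else if c % 8 = 4 then 8*(c/8)+3
  else if c % 8 = 5 then 6*(c/8)+4
  else if c % 8 = 6 then 12*(c/8)+9
  else 8*(c/8)+7

def sig (j : ℕ) : ℕ :=
  if j % 6 = 0 then 8*(j/6)
  else if j % 12 = 1 then 8*((j-1)/12) + 1
  else if j % 6 = 2 then 8*((j-2)/6) + 2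
  else if j % 12 = 5 then 8*((j-5)/12) + 3
  else if j % 8 = 3 then 8*((j-3)/8) + 4
  else if j % 6 = 4 then 8*((j-4)/6) + 5
  else if j % 12 = 9 then 8*((j-9)/12) + 6
  else 8*((j-7)/8) + 7

set_option maxHeartbeats 4000000 in
lemma sig_tau (c : ℕ) : sig (tau c) = c := by
  have h : ∀ x : ℕ, sig x = if x % 6 = 0 then 8*(x/6)
    else if x % 12 = 1 then 8*((x-1)/12) + 1
    else if x % 6 = 2 then 8*((x-2)/6) + 2
    else if x % 12 = 5 then 8*((x-5)/12) + 3
    else if x % 8 = 3 then 8*((x-3)/8) + 4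
    else if x % 6 = 4 then 8*((x-4)/6) + 5
    else if x % 12 = 9 then 8*((x-9)/12) + 6
    else 8*((x-7)/8) + 7 := fun x => rfl
  unfold tau
  split_ifs <;> rw [h] <;> split_ifs <;> omega

set_option maxHeartbeats 4000000 in
lemma tau_sig (j : ℕ) : tau (sig j) = j := by
  have h : ∀ x : ℕ, tau x = if x % 8 = 0 then 6*(x/8)
    else if x % 8 = 1 then 12*(x/8)+1
    else if x % 8 = 2 then 6*(x/8)+2
    else if x % 8 = 3 then 12*(x/8)+5
    else if x % 8 = 4 then 8*(x/8)+3
    else if x % 8 = 5 then 6*(x/8)+4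
    else if x % 8 = 6 then 12*(x/8)+9
    else 8*(x/8)+7 := fun x => rfl
  unfold sig
  split_ifs <;> rw [h] <;> split_ifs <;> omega


def eσ : ℕ ≃ ℕ := ⟨sig, tau, tau_sig, sig_tau⟩


noncomputable def s : ℝ := (Real.sqrt 2)⁻¹

lemma s_mul_s : s * s = 1/2 := by
  rw [s, ← mul_inv, Real.mul_self_sqrt (by norm_num : (0:ℝ) ≤ 2)]; norm_num

noncomputable def V (i c : ℕ) : ℝ :=
  if i % 8 = 0 ∨ i % 8 = 2 ∨ i % 8 = 5 then
    (if c = i then s else if c = i + 1 then s else 0)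
  else if i % 8 = 1 ∨ i % 8 = 3 ∨ i % 8 = 6 then
    (if c = i - 1 then s else if c = i then -s else 0)
  else (if c = i then 1 else 0)

set_option maxHeartbeats 2000000 in
lemma Vsymm (i c : ℕ) : V i c = V c i := by
  unfold V
  split_ifs <;> first | rfl | (exfalso; omega)

lemma hasSum_pair {a b : ℕ} (hab : a ≠ b) (x y : ℝ) :
    HasSum (fun c => if c = a then x else if c = b then y else 0) (x + y) := by
  have h3 := (hasSum_ite_eq a x).add (hasSum_ite_eq b y)
  convert h3 using 1
  funext c
  by_cases h1 : c = a
  · subst h1; simp [hab]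
  · by_cases h2 : c = b <;> simp [h1, h2, Ne.symm hab]

set_option maxHeartbeats 4000000 in
lemma Vrow (i i' : ℕ) :
    HasSum (fun c => V i c * V i' c) (if i = i' then (1:ℝ) else 0) := by
  by_cases h : i = i'
  · subst h
    rw [if_pos rfl]
    by_cases hA : i % 8 = 0 ∨ i % 8 = 2 ∨ i % 8 = 5
    · have he : (fun c => V i c * V i c)
          = fun c => if c = i then s*s else if c = i+1 then s*s else 0 := by
        funext c; unfold V; split_ifs <;> first | rfl | (exfalso; omega) | ring
      rw [he]
      simp only [s_mul_s]
      have := hasSum_pair (by omega : i ≠ i+1) ((1:ℝ)/2) ((1:ℝ)/2)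
      convert this using 1; norm_num
    · by_cases hB : i % 8 = 1 ∨ i % 8 = 3 ∨ i % 8 = 6
      · have he : (fun c => V i c * V i c)
            = fun c => if c = i-1 then s*s else if c = i then s*s else 0 := by
          funext c; unfold V; split_ifs <;> first | rfl | (exfalso; omega) | ring
        rw [he]
        simp only [s_mul_s]
        have := hasSum_pair (by omega : i-1 ≠ i) ((1:ℝ)/2) ((1:ℝ)/2)
        convert this using 1; norm_num
      · have he : (fun c => V i c * V i c)
            = fun c => if c = i then (1:ℝ) else if c = i+1 then 0 else 0 := by
          funext c; unfold V; split_ifs <;> first | rfl | (exfalso; omega) | ring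
        rw [he]
        have := hasSum_pair (by omega : i ≠ i+1) (1:ℝ) 0
        convert this using 1; norm_num
  · rw [if_neg h]
    by_cases hb1 : i' = i + 1 ∧ (i % 8 = 0 ∨ i % 8 = 2 ∨ i % 8 = 5)
    · -- same block, i first
      have he : (fun c => V i c * V i' c)
          = fun c => if c = i then s*s else if c = i+1 then -(s*s) else 0 := by
        funext c; unfold V; split_ifs <;> first | rfl | (exfalso; omega) | ring
      rw [he]
      have := hasSum_pair (by omega : i ≠ i+1) (s*s) (-(s*s))
      convert this using 1; ring
    · by_cases hb2 : i = i' + 1 ∧ (i' % 8 = 0 ∨ i' % 8 = 2 ∨ i' % 8 = 5)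
      · have he : (fun c => V i c * V i' c)
            = fun c => if c = i' then s*s else if c = i'+1 then -(s*s) else 0 := by
          funext c; unfold V; split_ifs <;> first | rfl | (exfalso; omega) | ring
        rw [he]
        have := hasSum_pair (by omega : i' ≠ i'+1) (s*s) (-(s*s))
        convert this using 1; ring
      · -- disjoint supports
        have he : (fun c => V i c * V i' c) = fun _ => (0:ℝ) := by
          funext c; unfold V; split_ifs <;> first | (exfalso; omega) | ring
        rw [he]
        exact hasSum_zero

def U (i j : ℕ) : ℝ := V i (sig j)

lemma Urow (i i' : ℕ) :
    HasSum (fun j => U i j * U i' j) (if i = i' then (1:ℝ) else 0) := by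
  have he : (fun j => U i j * U i' j) = (fun c => V i c * V i' c) ∘ (⇑eσ) := by
    funext j
    simp only [Function.comp, U, eσ, Equiv.coe_fn_mk]
  rw [he]
  exact (Equiv.hasSum_iff eσ).mpr (Vrow i i')

lemma sig_inj : Function.Injective sig := eσ.injective

lemma Ucol (j j' : ℕ) :
    HasSum (fun i => U i j * U i j') (if j = j' then (1:ℝ) else 0) := by
  have h := Vrow (sig j) (sig j')
  have he : (fun c => V (sig j) c * V (sig j') c) = (fun i => U i j * U i j') := by
    funext i
    simp only [U]
    rw [Vsymm i (sig j), Vsymm i (sig j')]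
  rw [he] at h
  have hiff : (if sig j = sig j' then (1:ℝ) else 0) = (if j = j' then (1:ℝ) else 0) := by
    by_cases hjj : j = j'
    · simp [hjj]
    · rw [if_neg hjj, if_neg (fun hh => hjj (sig_inj hh))]
  rwa [hiff] at h

lemma orthU : OrthogonalMatrix U := ⟨Urow, Ucol⟩

/-- the resulting row values, explicitly. -/
noncomputable def tt (i : ℕ) : ℝ :=
  if i % 8 = 0 ∨ i % 8 = 1 then 3/(4*(6*((i/8 : ℕ) : ℝ)+1))
  else if i % 8 = 2 ∨ i % 8 = 3 then 3/(4*(6*((i/8 : ℕ) : ℝ)+3))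
  else if i % 8 = 4 then 1/(8*((i/8 : ℕ) : ℝ)+4)
  else if i % 8 = 5 ∨ i % 8 = 6 then 3/(4*(6*((i/8 : ℕ) : ℝ)+5))
  else 1/(8*((i/8 : ℕ) : ℝ)+8)

lemma Vsq_pairA (i : ℕ) (h : i % 8 = 0 ∨ i % 8 = 2 ∨ i % 8 = 5) (g : ℕ → ℝ) :
    (fun c => (V i c)^2 * g c)
      = fun c => if c = i then s^2 * g i else if c = i+1 then s^2 * g (i+1) else 0 := by
  funext c
  by_cases hc : c = i
  · subst hc; simp [V, h]
  · by_cases hc2 : c = i+1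
    · subst hc2; simp [V, h, show i+1 ≠ i from by omega]
    · simp [V, h, hc, hc2]

lemma Vsq_pairB (i : ℕ) (h : i % 8 = 1 ∨ i % 8 = 3 ∨ i % 8 = 6) (g : ℕ → ℝ) :
    (fun c => (V i c)^2 * g c)
      = fun c => if c = i-1 then s^2 * g (i-1) else if c = i then s^2 * g i else 0 := by
  have hA : ¬(i % 8 = 0 ∨ i % 8 = 2 ∨ i % 8 = 5) := by omega
  funext c
  by_cases hc : c = i-1
  · subst hc; simp [V, hA, h, show i-1 ≠ i from by omega]
  · by_cases hc2 : c = i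
    · subst hc2; simp [V, hA, h, hc]
    · simp [V, hA, h, hc, hc2]

lemma Vsq_single (i : ℕ) (hA : ¬(i % 8 = 0 ∨ i % 8 = 2 ∨ i % 8 = 5))
    (hB : ¬(i % 8 = 1 ∨ i % 8 = 3 ∨ i % 8 = 6)) (g : ℕ → ℝ) :
    (fun c => (V i c)^2 * g c)
      = fun c => if c = i then g i else if c = i+1 then 0 else 0 := by
  funext c
  by_cases hc : c = i
  · subst hc; simp [V, hA, hB]
  · simp [V, hA, hB, hc]

lemma s_sq : s^2 = 1/2 := by rw [sq]; exact s_mul_s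

lemma hQt (i : ℕ) : HasSum (fun j => (U i j)^2 * harmonic' j) (tt i) := by
  have key : HasSum (fun c => (V i c)^2 * harmonic' (tau c)) (tt i) := by
    have h8 : i % 8 = 0 ∨ i % 8 = 1 ∨ i % 8 = 2 ∨ i % 8 = 3 ∨ i % 8 = 4 ∨ i % 8 = 5
        ∨ i % 8 = 6 ∨ i % 8 = 7 := by omega
    have hx : (0:ℝ) ≤ ((i/8 : ℕ) : ℝ) := Nat.cast_nonneg _
    rcases h8 with h|h|h|h|h|h|h|h
    · -- r = 0 : cols i, i+1 ↦ 6m, 12m+1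
      rw [Vsq_pairA i (by omega) _]
      have hta : tau i = 6*(i/8) := by simp [tau, h]
      have htb : tau (i+1) = 12*(i/8)+1 := by
        have e1 : (i+1) % 8 = 1 := by omega
        have e2 : (i+1)/8 = i/8 := by omega
        simp [tau, e1, e2]
      rw [hta, htb]
      convert hasSum_pair (show i ≠ i+1 by omega) _ _ using 1
      simp only [tt, h, harmonic', s_sq]
      norm_num
      push_cast
      have d1 : (6*((i/8:ℕ):ℝ)+1) ≠ 0 := by positivity
      have d2 : (12*((i/8:ℕ):ℝ)+1+1) ≠ 0 := by positivity
      have d3 : (4*(6*((i/8:ℕ):ℝ)+1)) ≠ 0 := by positivity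
      field_simp
      ring
    · -- r = 1 : cols i-1, i ↦ 6m, 12m+1
      rw [Vsq_pairB i (by omega) _]
      have hta : tau (i-1) = 6*(i/8) := by
        have e1 : (i-1) % 8 = 0 := by omega
        have e2 : (i-1)/8 = i/8 := by omega
        simp [tau, e1, e2]
      have htb : tau i = 12*(i/8)+1 := by simp [tau, h]
      rw [hta, htb]
      convert hasSum_pair (show i-1 ≠ i by omega) _ _ using 1
      simp only [tt, h, harmonic', s_sq]
      norm_num
      push_cast
      field_simp
      ring
    · -- r = 2 : cols i, i+1 ↦ 6m+2, 12m+5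
      rw [Vsq_pairA i (by omega) _]
      have hta : tau i = 6*(i/8)+2 := by simp [tau, h]
      have htb : tau (i+1) = 12*(i/8)+5 := by
        have e1 : (i+1) % 8 = 3 := by omega
        have e2 : (i+1)/8 = i/8 := by omega
        simp [tau, e1, e2]
      rw [hta, htb]
      convert hasSum_pair (show i ≠ i+1 by omega) _ _ using 1
      simp only [tt, h, harmonic', s_sq]
      norm_num
      push_cast
      field_simp
      ring
    · -- r = 3 : cols i-1, i ↦ 6m+2, 12m+5
      rw [Vsq_pairB i (by omega) _]
      have hta : tau (i-1) = 6*(i/8)+2 := by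
        have e1 : (i-1) % 8 = 2 := by omega
        have e2 : (i-1)/8 = i/8 := by omega
        simp [tau, e1, e2]
      have htb : tau i = 12*(i/8)+5 := by simp [tau, h]
      rw [hta, htb]
      convert hasSum_pair (show i-1 ≠ i by omega) _ _ using 1
      simp only [tt, h, harmonic', s_sq]
      norm_num
      push_cast
      field_simp
      ring
    · -- r = 4 : single col i ↦ 8m+3
      rw [Vsq_single i (by omega) (by omega) _]
      have hta : tau i = 8*(i/8)+3 := by simp [tau, h]
      rw [hta]
      convert hasSum_pair (show i ≠ i+1 by omega) _ _ using 1
      simp only [tt, h, harmonic']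
      norm_num
      push_cast
      ring
    · -- r = 5 : cols i, i+1 ↦ 6m+4, 12m+9
      rw [Vsq_pairA i (by omega) _]
      have hta : tau i = 6*(i/8)+4 := by simp [tau, h]
      have htb : tau (i+1) = 12*(i/8)+9 := by
        have e1 : (i+1) % 8 = 6 := by omega
        have e2 : (i+1)/8 = i/8 := by omega
        simp [tau, e1, e2]
      rw [hta, htb]
      convert hasSum_pair (show i ≠ i+1 by omega) _ _ using 1
      simp only [tt, h, harmonic', s_sq]
      norm_num
      push_cast
      field_simp
      ring
    · -- r = 6 : cols i-1, i ↦ 6m+4, 12m+9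
      rw [Vsq_pairB i (by omega) _]
      have hta : tau (i-1) = 6*(i/8)+4 := by
        have e1 : (i-1) % 8 = 5 := by omega
        have e2 : (i-1)/8 = i/8 := by omega
        simp [tau, e1, e2]
      have htb : tau i = 12*(i/8)+9 := by simp [tau, h]
      rw [hta, htb]
      convert hasSum_pair (show i-1 ≠ i by omega) _ _ using 1
      simp only [tt, h, harmonic', s_sq]
      norm_num
      push_cast
      field_simp
      ring
    · -- r = 7 : single col i ↦ 8m+7
      rw [Vsq_single i (by omega) (by omega) _]
      have hta : tau i = 8*(i/8)+7 := by simp [tau, h]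
      rw [hta]
      convert hasSum_pair (show i ≠ i+1 by omega) _ _ using 1
      simp only [tt, h, harmonic']
      norm_num
      push_cast
      ring
  have he : (fun j => (U i j)^2 * harmonic' j)
      = (fun c => (V i c)^2 * harmonic' (tau c)) ∘ (⇑eσ) := by
    funext j
    simp only [Function.comp, U, eσ, Equiv.coe_fn_mk]
    rw [tau_sig]
  rw [he]
  exact (Equiv.hasSum_iff eσ).mpr key




lemma tt0 (k : ℕ) : tt (8*k) = 3/(4*(6*(k:ℝ)+1)) := by
  have h : (8*k) % 8 = 0 := by omega
  have h2 : (8*k)/8 = k := by omega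
  simp [tt, h, h2]
lemma tt1 (k : ℕ) : tt (8*k+1) = 3/(4*(6*(k:ℝ)+1)) := by
  have h : (8*k+1) % 8 = 1 := by omega
  have h2 : (8*k+1)/8 = k := by omega
  simp [tt, h, h2]
lemma tt2 (k : ℕ) : tt (8*k+2) = 3/(4*(6*(k:ℝ)+3)) := by
  have h : (8*k+2) % 8 = 2 := by omega
  have h2 : (8*k+2)/8 = k := by omega
  simp [tt, h, h2]
lemma tt3 (k : ℕ) : tt (8*k+3) = 3/(4*(6*(k:ℝ)+3)) := by
  have h : (8*k+3) % 8 = 3 := by omega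
  have h2 : (8*k+3)/8 = k := by omega
  simp [tt, h, h2]
lemma tt4 (k : ℕ) : tt (8*k+4) = 1/(8*(k:ℝ)+4) := by
  have h : (8*k+4) % 8 = 4 := by omega
  have h2 : (8*k+4)/8 = k := by omega
  simp [tt, h, h2]
lemma tt5 (k : ℕ) : tt (8*k+5) = 3/(4*(6*(k:ℝ)+5)) := by
  have h : (8*k+5) % 8 = 5 := by omega
  have h2 : (8*k+5)/8 = k := by omega
  simp [tt, h, h2]
lemma tt6 (k : ℕ) : tt (8*k+6) = 3/(4*(6*(k:ℝ)+5)) := by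
  have h : (8*k+6) % 8 = 6 := by omega
  have h2 : (8*k+6)/8 = k := by omega
  simp [tt, h, h2]
lemma tt7 (k : ℕ) : tt (8*k+7) = 1/(8*(k:ℝ)+8) := by
  have h : (8*k+7) % 8 = 7 := by omega
  have h2 : (8*k+7)/8 = k := by omega
  simp [tt, h, h2]

lemma tt_anti : Antitone tt := by
  apply antitone_nat_of_succ_le
  intro i
  have h8 : i % 8 < 8 := by omega
  obtain ⟨k, r, hr, rfl⟩ : ∃ k r, r < 8 ∧ i = 8*k+r := ⟨i/8, i%8, by omega, by omega⟩
  have hx : (0:ℝ) ≤ (k:ℝ) := Nat.cast_nonneg _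
  interval_cases r
  · rw [show 8*k+0 = 8*k from rfl, show 8*k+1 = 8*k+1 from rfl, tt0, tt1]
  · rw [show (8*k+1)+1 = 8*k+2 from rfl, tt1, tt2]
    apply div_le_div_of_nonneg_left (by norm_num) (by positivity) (by linarith)
  · rw [show (8*k+2)+1 = 8*k+3 from rfl, tt2, tt3]
  · rw [show (8*k+3)+1 = 8*k+4 from rfl, tt3, tt4]
    rw [div_le_div_iff₀ (by positivity) (by positivity)]
    ring_nf
    nlinarith [hx]
  · rw [show (8*k+4)+1 = 8*k+5 from rfl, tt4, tt5]
    rw [div_le_div_iff₀ (by positivity) (by positivity)]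
    nlinarith [hx]
  · rw [show (8*k+5)+1 = 8*k+6 from rfl, tt5, tt6]
  · rw [show (8*k+6)+1 = 8*k+7 from rfl, tt6, tt7]
    rw [div_le_div_iff₀ (by positivity) (by positivity)]
    nlinarith [hx]
  · rw [show (8*k+7)+1 = 8*(k+1) from by ring, tt7, tt0]
    rw [div_le_div_iff₀ (by positivity) (by positivity)]
    push_cast
    nlinarith [hx]

/-- partial sums of the harmonic sequence. -/
noncomputable def H (n : ℕ) : ℝ := ∑ m ∈ range n, harmonic' m

/-- the deficiency. -/
noncomputable def D (n : ℕ) : ℝ := ∑ j ∈ range n, (harmonic' j - tt j)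

lemma hharm (n : ℕ) : harmonic' n = 1/((n:ℝ)+1) := rfl

lemma D_closed : ∀ K : ℕ, D (8*K) = H (8*K) - (3/2)*H (6*K) + (3/4)*H (3*K) - (1/4)*H (2*K) := by
  intro K
  induction K with
  | zero => simp [D, H]
  | succ K ih =>
    have e8 : D (8*(K+1)) = D (8*K) + ((harmonic' (8*K) - tt (8*K)) + (harmonic' (8*K+1) - tt (8*K+1))
        + (harmonic' (8*K+2) - tt (8*K+2)) + (harmonic' (8*K+3) - tt (8*K+3))
        + (harmonic' (8*K+4) - tt (8*K+4)) + (harmonic' (8*K+5) - tt (8*K+5))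
        + (harmonic' (8*K+6) - tt (8*K+6)) + (harmonic' (8*K+7) - tt (8*K+7))) := by
      have : 8*(K+1) = (8*K+7)+1 := by ring
      rw [this]
      simp only [D, sum_range_succ]
      ring
    have f8 : H (8*(K+1)) = H (8*K) + (harmonic' (8*K) + harmonic' (8*K+1) + harmonic' (8*K+2)
        + harmonic' (8*K+3) + harmonic' (8*K+4) + harmonic' (8*K+5) + harmonic' (8*K+6)
        + harmonic' (8*K+7)) := by
      have : 8*(K+1) = (8*K+7)+1 := by ring
      rw [this]
      simp only [H]
      simp only [sum_range_succ]
      ring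
    have f6 : H (6*(K+1)) = H (6*K) + (harmonic' (6*K) + harmonic' (6*K+1) + harmonic' (6*K+2)
        + harmonic' (6*K+3) + harmonic' (6*K+4) + harmonic' (6*K+5)) := by
      have : 6*(K+1) = (6*K+5)+1 := by ring
      rw [this]
      simp only [H]
      simp only [sum_range_succ]
      ring
    have f3 : H (3*(K+1)) = H (3*K) + (harmonic' (3*K) + harmonic' (3*K+1) + harmonic' (3*K+2)) := by
      have : 3*(K+1) = (3*K+2)+1 := by ring
      rw [this]
      simp only [H]
      simp only [sum_range_succ]
      ring
    have f2 : H (2*(K+1)) = H (2*K) + (harmonic' (2*K) + harmonic' (2*K+1)) := by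
      have : 2*(K+1) = (2*K+1)+1 := by ring
      rw [this]
      simp only [H]
      simp only [sum_range_succ]
      ring
    rw [e8, f8, f6, f3, f2, ih]
    rw [tt0, tt1, tt2, tt3, tt4, tt5, tt6, tt7]
    simp only [hharm]
    push_cast
    have hx : (0:ℝ) ≤ (K:ℝ) := Nat.cast_nonneg _
    set x := (K:ℝ) with hxdef
    have m1 : (3:ℝ)/2*(1/(6*x+2)) = 3/4*(1/(3*x+1)) := by
      have : (6*x+2) ≠ 0 := by positivity
      have : (3*x+1) ≠ 0 := by positivity
      field_simp
      ring
    have m2 : (3:ℝ)/2*(1/(6*x+4)) = 3/4*(1/(3*x+2)) := by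
      have : (6*x+4) ≠ 0 := by positivity
      have : (3*x+2) ≠ 0 := by positivity
      field_simp
      ring
    have m3 : (3:ℝ)/2*(1/(6*x+6)) = 3/4*(1/(3*x+3)) := by
      have : (6*x+6) ≠ 0 := by positivity
      have : (3*x+3) ≠ 0 := by positivity
      field_simp
      ring
    have m4 : (1:ℝ)/4*(1/(2*x+1)) = 1/(8*x+4) := by
      have : (2*x+1) ≠ 0 := by positivity
      have : (8*x+4) ≠ 0 := by positivity
      field_simp
      ring
    have m5 : (1:ℝ)/4*(1/(2*x+2)) = 1/(8*x+8) := by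
      have : (2*x+2) ≠ 0 := by positivity
      have : (8*x+8) ≠ 0 := by positivity
      field_simp
      ring
    have m6 : (6:ℝ)/(24*x+4) = 3/2*(1/(6*x+1)) := by
      have : (24*x+4) ≠ 0 := by positivity
      have : (6*x+1) ≠ 0 := by positivity
      field_simp
      ring
    have m7 : (6:ℝ)/(24*x+12) = 3/2*(1/(6*x+3)) := by
      have : (24*x+12) ≠ 0 := by positivity
      have : (6*x+3) ≠ 0 := by positivity
      field_simp
      ring
    have m8 : (6:ℝ)/(24*x+20) = 3/2*(1/(6*x+5)) := by
      have : (24*x+20) ≠ 0 := by positivity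
      have : (6*x+5) ≠ 0 := by positivity
      field_simp
      ring
    linear_combination m1 + m2 + m3 + m4 + m5 - m6 - m7 - m8

lemma D_succ (n : ℕ) : D (n+1) = D n + (harmonic' n - tt n) := by
  simp [D, sum_range_succ]; ring

lemma H_sub_ge_log (a b : ℕ) (hab : a ≤ b) :
    Real.log ((b:ℝ)+1) - Real.log ((a:ℝ)+1) ≤ H b - H a := by
  induction b, hab using Nat.le_induction with
  | base => simp
  | succ n hn ih =>
    have hH : H (n+1) = H n + harmonic' n := by simp [H, sum_range_succ]
    have key : Real.log ((n:ℝ)+1+1) - Real.log ((n:ℝ)+1) ≤ harmonic' n := by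
      have hlog : Real.log (((n:ℝ)+2)/((n:ℝ)+1)) ≤ ((n:ℝ)+2)/((n:ℝ)+1) - 1 :=
        Real.log_le_sub_one_of_pos (by positivity)
      rw [Real.log_div (by positivity) (by positivity)] at hlog
      have e1 : ((n:ℝ)+2)/((n:ℝ)+1) - 1 = 1/((n:ℝ)+1) := by
        field_simp
        try ring
        try norm_num
      rw [e1] at hlog
      rw [hharm]
      have e2 : ((n:ℝ)+1+1) = ((n:ℝ)+2) := by ring
      rw [e2]
      exact hlog
    rw [hH]
    push_cast
    linarith

lemma H_sub_le_log (a b : ℕ) (ha : 1 ≤ a) (hab : a ≤ b) :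
    H b - H a ≤ Real.log (b:ℝ) - Real.log (a:ℝ) := by
  induction b, hab using Nat.le_induction with
  | base => simp
  | succ n hn ih =>
    have hn1 : 1 ≤ n := le_trans ha hn
    have hnpos : (0:ℝ) < (n:ℝ) := by exact_mod_cast hn1
    have hH : H (n+1) = H n + harmonic' n := by simp [H, sum_range_succ]
    have key : harmonic' n ≤ Real.log ((n:ℝ)+1) - Real.log (n:ℝ) := by
      have hlog : Real.log ((n:ℝ)/((n:ℝ)+1)) ≤ (n:ℝ)/((n:ℝ)+1) - 1 :=
        Real.log_le_sub_one_of_pos (by positivity)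
      rw [Real.log_div (by positivity) (by positivity)] at hlog
      have e1 : (n:ℝ)/((n:ℝ)+1) - 1 = -(1/((n:ℝ)+1)) := by
        field_simp
        try ring
        try norm_num
      rw [e1] at hlog
      rw [hharm]
      linarith
    rw [hH]
    push_cast
    linarith

lemma log_ge_one_sub_inv (x : ℝ) (hx : 0 < x) : 1 - 1/x ≤ Real.log x := by
  have h := Real.log_le_sub_one_of_pos (show (0:ℝ) < 1/x by positivity)
  rw [one_div, Real.log_inv] at h
  have : (1:ℝ)/x = x⁻¹ := one_div x
  linarith [this ▸ h]

lemma log32_le : Real.log (3/2) ≤ 0.42 := by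
  have e1 : Real.exp 0.42 = (Real.exp 0.0042)^(100:ℕ) := by
    rw [← Real.exp_nat_mul]; norm_num
  have e2 : ((1.0042:ℝ))^(100:ℕ) ≤ (Real.exp 0.0042)^(100:ℕ) := by
    apply pow_le_pow_left₀ (by norm_num)
    have := Real.add_one_le_exp (0.0042:ℝ)
    linarith
  have e3 : (3/2:ℝ) ≤ (1.0042:ℝ)^(100:ℕ) := by norm_num
  have : (3/2:ℝ) ≤ Real.exp 0.42 := by
    rw [e1]; exact le_trans e3 e2
  exact (Real.log_le_iff_le_exp (by norm_num)).mpr this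

/-- the limiting deficiency constant, `(1/2)log 2 - (3/4)log(3/2) ≈ 0.0425`. -/
noncomputable def C0 : ℝ := (1/2)*Real.log 2 - (3/4)*Real.log (3/2)

lemma C0_ge : (0.0315:ℝ) ≤ C0 := by
  have h1 := Real.log_two_gt_d9
  have h2 := log32_le
  rw [C0]
  nlinarith

lemma D8_lower (K : ℕ) (hK : 1 ≤ K) :
    C0 - (1/(24*(K:ℝ)+3) + 1/(4*(6*(K:ℝ)+2))) ≤ D (8*K) := by
  have hx : (1:ℝ) ≤ (K:ℝ) := by exact_mod_cast hK
  set x := (K:ℝ) with hxdef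
  have hxpos : (0:ℝ) < x := by linarith
  -- harmonic differences vs logs
  have a1 : Real.log (8*x+1) - Real.log (6*x+1) ≤ H (8*K) - H (6*K) := by
    have := H_sub_ge_log (6*K) (8*K) (by omega)
    push_cast at this
    linarith
  have a2 : H (6*K) - H (3*K) ≤ Real.log (6*x) - Real.log (3*x) := by
    have := H_sub_le_log (3*K) (6*K) (by omega) (by omega)
    push_cast at this
    linarith
  have a3 : Real.log (3*x+1) - Real.log (2*x+1) ≤ H (3*K) - H (2*K) := by
    have := H_sub_ge_log (2*K) (3*K) (by omega)
    push_cast at this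
    linarith
  -- log(6x) - log(3x) = log 2
  have b2 : Real.log (6*x) - Real.log (3*x) = Real.log 2 := by
    rw [← Real.log_div (by positivity) (by positivity)]
    congr 1
    field_simp
    ring
  -- log(8x+1) - log(6x+1) ≥ log 2 - log (3/2) - 1/(24x+3)
  have e2 : Real.log ((4:ℝ)/3) = Real.log 2 - Real.log (3/2) := by
    rw [show (4:ℝ)/3 = 2/(3/2) by norm_num,
      Real.log_div (by norm_num) (by norm_num)]
  have b1 : Real.log 2 - Real.log (3/2) - 1/(24*x+3) ≤ Real.log (8*x+1) - Real.log (6*x+1) := by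
    have e1 : (8*x+1)/(6*x+1) = (4/3) * ((24*x+3)/(24*x+4)) := by
      field_simp
      ring
    have e5 : Real.log (8*x+1) - Real.log (6*x+1)
        = Real.log ((4:ℝ)/3) + Real.log ((24*x+3)/(24*x+4)) := by
      rw [← Real.log_div (by positivity) (by positivity), e1,
        Real.log_mul (by norm_num) (by positivity)]
    have e3 : 1 - 1/((24*x+3)/(24*x+4)) ≤ Real.log ((24*x+3)/(24*x+4)) :=
      log_ge_one_sub_inv _ (by positivity)
    have e4 : 1 - 1/((24*x+3)/(24*x+4)) = -(1/(24*x+3)) := by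
      rw [one_div_div]
      field_simp
      try ring
      try norm_num
    rw [e4] at e3
    rw [e5, e2]
    linarith
  -- log(3x+1) - log(2x+1) ≥ log(3/2) - 1/(6x+2)
  have b3 : Real.log (3/2) - 1/(6*x+2) ≤ Real.log (3*x+1) - Real.log (2*x+1) := by
    have e1 : (3*x+1)/(2*x+1) = (3/2) * ((6*x+2)/(6*x+3)) := by
      field_simp
      ring
    have e5 : Real.log (3*x+1) - Real.log (2*x+1)
        = Real.log ((3:ℝ)/2) + Real.log ((6*x+2)/(6*x+3)) := by
      rw [← Real.log_div (by positivity) (by positivity), e1,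
        Real.log_mul (by norm_num) (by positivity)]
    have e3 : 1 - 1/((6*x+2)/(6*x+3)) ≤ Real.log ((6*x+2)/(6*x+3)) :=
      log_ge_one_sub_inv _ (by positivity)
    have e4 : 1 - 1/((6*x+2)/(6*x+3)) = -(1/(6*x+2)) := by
      rw [one_div_div]
      field_simp
      try ring
      try norm_num
    rw [e4] at e3
    rw [e5]
    linarith
  have hD := D_closed K
  rw [C0]
  have e6 : 1/(4*(6*x+2)) = (1/4) * (1/(6*x+2)) := by
    field_simp
  rw [e6]
  linarith [a1, a2, a3, b1, b2, b3, hD]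

lemma period_nonpos (K : ℕ) (hK : 1 ≤ K) : D (8*(K+1)) ≤ D (8*K) := by
  have hx : (1:ℝ) ≤ (K:ℝ) := by exact_mod_cast hK
  set x := (K:ℝ) with hxdef
  have e8 : D (8*(K+1)) = D (8*K) + ((harmonic' (8*K) - tt (8*K)) + (harmonic' (8*K+1) - tt (8*K+1))
      + (harmonic' (8*K+2) - tt (8*K+2)) + (harmonic' (8*K+3) - tt (8*K+3))
      + (harmonic' (8*K+4) - tt (8*K+4)) + (harmonic' (8*K+5) - tt (8*K+5))
      + (harmonic' (8*K+6) - tt (8*K+6)) + (harmonic' (8*K+7) - tt (8*K+7))) := by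
    have e : 8*(K+1) = (8*K+7)+1 := by ring
    rw [e]
    simp only [D, sum_range_succ]
    ring
  rw [e8]
  rw [tt0, tt1, tt2, tt3, tt4, tt5, tt6, tt7]
  simp only [hharm]
  push_cast
  rw [← hxdef]
  -- suffices: sum of increments over the period is ≤ 0
  have hden1 : (0:ℝ) < 6*x+1 := by linarith
  have hden2 : (0:ℝ) < 6*x+3 := by linarith
  have hden3 : (0:ℝ) < 6*x+5 := by linarith
  have hd1 : (0:ℝ) < 8*x+1 := by linarith
  have hd2 : (0:ℝ) < 8*x+2 := by linarith
  have hd3 : (0:ℝ) < 8*x+3 := by linarith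
  have hd4 : (0:ℝ) < 8*x+4 := by linarith
  have hd5 : (0:ℝ) < 8*x+5 := by linarith
  have hd6 : (0:ℝ) < 8*x+6 := by linarith
  have hd7 : (0:ℝ) < 8*x+7 := by linarith
  have hd8 : (0:ℝ) < 8*x+8 := by linarith
  have key : (1/(8*x+1) + 1/(8*x+2) + 1/(8*x+3) + 1/(8*x+5) + 1/(8*x+6) + 1/(8*x+7))
      ≤ 3/2*(1/(6*x+1)) + 3/2*(1/(6*x+3)) + 3/2*(1/(6*x+5)) := by
    rw [← sub_nonneg]
    have hid : 3/2*(1/(6*x+1)) + 3/2*(1/(6*x+3)) + 3/2*(1/(6*x+5))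
        - (1/(8*x+1) + 1/(8*x+2) + 1/(8*x+3) + 1/(8*x+5) + 1/(8*x+6) + 1/(8*x+7))
        = (49152*x^6 + 147456*x^5 + 178944*x^4 + 112128*x^3 + 32184*x^2 + 696*x - 810)
          / ((6*x+1)*(6*x+3)*(6*x+5)*(8*x+1)*(8*x+2)*(8*x+3)*(8*x+5)*(8*x+6)*(8*x+7)) := by
      field_simp
      ring
    rw [hid]
    apply div_nonneg
    · have p2 : (1:ℝ) ≤ x^2 := by nlinarith
      have p3 : (0:ℝ) ≤ x^3 := by positivity
      have p4 : (0:ℝ) ≤ x^4 := by positivity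
      have p5 : (0:ℝ) ≤ x^5 := by positivity
      have p6 : (0:ℝ) ≤ x^6 := by positivity
      nlinarith
    · positivity
  have expand1 : 3/(4*(6*x+1)) = 3/4*(1/(6*x+1)) := by
    field_simp
  have expand2 : 3/(4*(6*x+3)) = 3/4*(1/(6*x+3)) := by
    field_simp
  have expand3 : 3/(4*(6*x+5)) = 3/4*(1/(6*x+5)) := by
    field_simp
  rw [expand1, expand2, expand3]
  ring_nf
  ring_nf at key
  linarith [key]

lemma D8_mono (K m : ℕ) (hK : 1 ≤ K) : D (8*(K+m)) ≤ D (8*K) := by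
  induction m with
  | zero => simp
  | succ m ih =>
    have h1 : D (8*((K+m)+1)) ≤ D (8*(K+m)) := period_nonpos (K+m) (by omega)
    have e : K+(m+1) = (K+m)+1 := by ring
    rw [e]
    exact le_trans h1 ih

lemma D8_ge_C (K : ℕ) (hK : 1 ≤ K) : C0 ≤ D (8*K) := by
  by_contra hcon
  push_neg at hcon
  have hεpos : 0 < C0 - D (8*K) := by linarith
  obtain ⟨M, hM⟩ := exists_nat_gt (1/(C0 - D (8*K)))
  have h1M : (0:ℝ) < 1/(C0 - D (8*K)) := by positivity
  have hMpos : (0:ℝ) < (M:ℝ) := lt_trans h1M hM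
  have hM1 : 1 ≤ M := by exact_mod_cast hMpos
  have hinvM : 1/(M:ℝ) < C0 - D (8*K) := by
    rw [div_lt_iff₀ hεpos] at hM
    rw [div_lt_iff₀ hMpos]
    linarith
  have hchain : D (8*(K+M)) ≤ D (8*K) := D8_mono K M hK
  have hlow := D8_lower (K+M) (by omega)
  have hy : (M:ℝ) ≤ ((K+M:ℕ):ℝ) := by push_cast; linarith [show (0:ℝ) ≤ (K:ℝ) from Nat.cast_nonneg _]
  set y := ((K+M:ℕ):ℝ) with hydef
  have hyM : (M:ℝ) ≤ y := hy
  have herr : 1/(24*y+3) + 1/(4*(6*y+2)) ≤ 1/(M:ℝ) := by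
    have e1 : 1/(24*y+3) ≤ 1/(2*(M:ℝ)) := by
      apply div_le_div_of_nonneg_left (by norm_num) (by positivity)
      linarith
    have e2 : 1/(4*(6*y+2)) ≤ 1/(2*(M:ℝ)) := by
      apply div_le_div_of_nonneg_left (by norm_num) (by positivity)
      linarith
    have e3 : 1/(2*(M:ℝ)) + 1/(2*(M:ℝ)) = 1/(M:ℝ) := by
      field_simp
      try ring
      try simp
    linarith
  linarith

/-- increment lower bounds within a period -/
lemma inc0 (K : ℕ) : 0 ≤ harmonic' (8*K) - tt (8*K) := by
  rw [tt0, hharm]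
  push_cast
  set x := (K:ℝ)
  have hx : (0:ℝ) ≤ x := Nat.cast_nonneg _
  rw [sub_nonneg, div_le_div_iff₀ (by positivity) (by positivity)]
  nlinarith

lemma inc1 (K : ℕ) (hK : 1 ≤ K) : -(1/140) ≤ harmonic' (8*K+1) - tt (8*K+1) := by
  rw [tt1, hharm]
  push_cast
  set x := (K:ℝ) with hxd
  have hx : (1:ℝ) ≤ x := by rw [hxd]; exact_mod_cast hK
  have e : 1/(8*x+1+1) - 3/(4*(6*x+1)) = -(6/((24*x+4)*(24*x+6))) := by
    field_simp
    ring
  rw [e, neg_le_neg_iff, div_le_div_iff₀ (by positivity) (by norm_num)]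
  nlinarith

lemma inc2 (K : ℕ) : 0 ≤ harmonic' (8*K+2) - tt (8*K+2) := by
  rw [tt2, hharm]
  push_cast
  set x := (K:ℝ)
  have hx : (0:ℝ) ≤ x := Nat.cast_nonneg _
  rw [sub_nonneg, div_le_div_iff₀ (by positivity) (by positivity)]
  nlinarith

lemma inc3 (K : ℕ) : 0 ≤ harmonic' (8*K+3) - tt (8*K+3) := by
  rw [tt3, hharm]
  push_cast
  set x := (K:ℝ)
  have hx : (0:ℝ) ≤ x := Nat.cast_nonneg _
  rw [sub_nonneg, div_le_div_iff₀ (by positivity) (by positivity)]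
  nlinarith

lemma inc4 (K : ℕ) (hK : 1 ≤ K) : -(1/156) ≤ harmonic' (8*K+4) - tt (8*K+4) := by
  rw [tt4, hharm]
  push_cast
  set x := (K:ℝ) with hxd
  have hx : (1:ℝ) ≤ x := by rw [hxd]; exact_mod_cast hK
  have e : 1/(8*x+4+1) - 1/(8*x+4) = -(1/((8*x+4)*(8*x+5))) := by
    field_simp
    ring
  rw [e, neg_le_neg_iff, div_le_div_iff₀ (by positivity) (by norm_num)]
  nlinarith

lemma inc5 (K : ℕ) : 0 ≤ harmonic' (8*K+5) - tt (8*K+5) := by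
  rw [tt5, hharm]
  push_cast
  set x := (K:ℝ)
  have hx : (0:ℝ) ≤ x := Nat.cast_nonneg _
  rw [sub_nonneg, div_le_div_iff₀ (by positivity) (by positivity)]
  nlinarith

lemma inc6 (K : ℕ) (hK : 1 ≤ K) : -(1/660) ≤ harmonic' (8*K+6) - tt (8*K+6) := by
  rw [tt6, hharm]
  push_cast
  set x := (K:ℝ) with hxd
  have hx : (1:ℝ) ≤ x := by rw [hxd]; exact_mod_cast hK
  have e : 1/(8*x+6+1) - 3/(4*(6*x+5)) = -(3/((24*x+20)*(24*x+21))) := by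
    field_simp
    ring
  rw [e, neg_le_neg_iff, div_le_div_iff₀ (by positivity) (by norm_num)]
  nlinarith

lemma inc7 (K : ℕ) : 0 ≤ harmonic' (8*K+7) - tt (8*K+7) := by
  rw [tt7, hharm]
  push_cast
  set x := (K:ℝ)
  have hx : (0:ℝ) ≤ x := Nat.cast_nonneg _
  rw [sub_nonneg, div_le_div_iff₀ (by positivity) (by positivity)]
  nlinarith

lemma Dmid (K : ℕ) (hK : 1 ≤ K) (r : ℕ) (hr : r ≤ 8) :
    D (8*K) - (1/140 + 1/156 + 1/660) ≤ D (8*K + r) := by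
  have i0 := inc0 K
  have i1 := inc1 K hK
  have i2 := inc2 K
  have i3 := inc3 K
  have i4 := inc4 K hK
  have i5 := inc5 K
  have i6 := inc6 K hK
  have i7 := inc7 K
  interval_cases r
  · simp; norm_num
  · rw [show 8*K+1 = (8*K)+1 from rfl, D_succ]; linarith
  · rw [show 8*K+2 = (8*K+1)+1 from rfl, D_succ, show 8*K+1 = (8*K)+1 from rfl, D_succ]
    linarith
  · rw [show 8*K+3 = (8*K+2)+1 from rfl, D_succ, show 8*K+2 = (8*K+1)+1 from rfl, D_succ,
      show 8*K+1 = (8*K)+1 from rfl, D_succ]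
    linarith
  · rw [show 8*K+4 = (8*K+3)+1 from rfl, D_succ, show 8*K+3 = (8*K+2)+1 from rfl, D_succ,
      show 8*K+2 = (8*K+1)+1 from rfl, D_succ, show 8*K+1 = (8*K)+1 from rfl, D_succ]
    linarith
  · rw [show 8*K+5 = (8*K+4)+1 from rfl, D_succ, show 8*K+4 = (8*K+3)+1 from rfl, D_succ,
      show 8*K+3 = (8*K+2)+1 from rfl, D_succ, show 8*K+2 = (8*K+1)+1 from rfl, D_succ,
      show 8*K+1 = (8*K)+1 from rfl, D_succ]
    linarith
  · rw [show 8*K+6 = (8*K+5)+1 from rfl, D_succ, show 8*K+5 = (8*K+4)+1 from rfl, D_succ,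
      show 8*K+4 = (8*K+3)+1 from rfl, D_succ, show 8*K+3 = (8*K+2)+1 from rfl, D_succ,
      show 8*K+2 = (8*K+1)+1 from rfl, D_succ, show 8*K+1 = (8*K)+1 from rfl, D_succ]
    linarith
  · rw [show 8*K+7 = (8*K+6)+1 from rfl, D_succ, show 8*K+6 = (8*K+5)+1 from rfl, D_succ,
      show 8*K+5 = (8*K+4)+1 from rfl, D_succ, show 8*K+4 = (8*K+3)+1 from rfl, D_succ,
      show 8*K+3 = (8*K+2)+1 from rfl, D_succ, show 8*K+2 = (8*K+1)+1 from rfl, D_succ,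
      show 8*K+1 = (8*K)+1 from rfl, D_succ]
    linarith
  · rw [show 8*K+8 = (8*K+7)+1 from rfl, D_succ, show 8*K+7 = (8*K+6)+1 from rfl, D_succ,
      show 8*K+6 = (8*K+5)+1 from rfl, D_succ, show 8*K+5 = (8*K+4)+1 from rfl, D_succ,
      show 8*K+4 = (8*K+3)+1 from rfl, D_succ, show 8*K+3 = (8*K+2)+1 from rfl, D_succ,
      show 8*K+2 = (8*K+1)+1 from rfl, D_succ, show 8*K+1 = (8*K)+1 from rfl, D_succ]
    linarith

lemma D_ge_eventually (n : ℕ) (hn : 8 ≤ n) : (1/100 : ℝ) ≤ D n := by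
  obtain ⟨K, r, hr, hK, rfl⟩ : ∃ K r, r ≤ 8 ∧ 1 ≤ K ∧ n = 8*K + r := by
    refine ⟨n/8, n%8, by omega, by omega, by omega⟩
  have h1 := Dmid K hK r hr
  have h2 := D8_ge_C K hK
  have h3 := C0_ge
  norm_num at h1 ⊢
  linarith

lemma D_nonneg (n : ℕ) : 0 ≤ D n := by
  by_cases hn : 8 ≤ n
  · linarith [D_ge_eventually n hn]
  · push_neg at hn
    have t0 := tt0 0
    have t1 := tt1 0
    have t2 := tt2 0
    have t3 := tt3 0
    have t4 := tt4 0
    have t5 := tt5 0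
    have t6 := tt6 0
    have t7 := tt7 0
    norm_num at t0 t1 t2 t3 t4 t5 t6 t7
    interval_cases n <;>
      simp_all [D, sum_range_succ, hharm] <;> norm_num


end Stmt5

/-- There is an orthostochastic matrix `Q` such that `Qω` is nonincreasing,
`Qω ≺ ω`, but `liminf_n ∑_{j<n} (ω_j − (Qω)_j) > 0`, i.e. `Qω` is not strongly
majorized by `ω`. -/
theorem stmt_5 :
    ∃ Q : ℕ → ℕ → ℝ, Orthostochastic Q ∧
      Antitone (fun i => ∑' j, Q i j * harmonic' j) ∧
      Maj (fun i => ∑' j, Q i j * harmonic' j) harmonic' ∧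
      0 < liminf (fun n =>
        ((∑ j ∈ range n, (harmonic' j - ∑' k, Q j k * harmonic' k) : ℝ) : EReal)) atTop := by
  refine ⟨fun i j => (Stmt5.U i j)^2, ⟨Stmt5.U, Stmt5.orthU, fun i j => rfl⟩, ?_, ?_, ?_⟩
  · have hts : ∀ i, ∑' j, (Stmt5.U i j)^2 * harmonic' j = Stmt5.tt i :=
      fun i => (Stmt5.hQt i).tsum_eq
    simp only [hts]
    exact Stmt5.tt_anti
  · intro n
    have h := Stmt5.D_nonneg n
    rw [Stmt5.D, Finset.sum_sub_distrib] at h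
    have hts : ∀ i, ∑' j, (Stmt5.U i j)^2 * harmonic' j = Stmt5.tt i :=
      fun i => (Stmt5.hQt i).tsum_eq
    simp only [hts]
    linarith
  · have hts : ∀ i, ∑' j, (Stmt5.U i j)^2 * harmonic' j = Stmt5.tt i :=
      fun i => (Stmt5.hQt i).tsum_eq
    simp only [hts]
    have h0 : (0:EReal) < ((1/100:ℝ):EReal) := by
      rw [show (0:EReal) = ((0:ℝ):EReal) from rfl, EReal.coe_lt_coe_iff]
      norm_num
    refine lt_of_lt_of_le h0 (le_liminf_of_le (by isBoundedDefault) ?_)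
    rw [eventually_atTop]
    refine ⟨8, fun n hn => ?_⟩
    rw [EReal.coe_le_coe_iff]
    exact Stmt5.D_ge_eventually n hn


end
end

section
/- Let P be a substochastic matrix with liminf_{n→∞} (n − ∑_{i=1}^n ∑_{j=1}^n P_{ij}) = 0. Then: (i) P is doubly stochastic; and (ii) for every η ∈ c₀*, if ζ is a nonincreasing rearrangement of Pη (i.e., ζ_n = (Pη)_{σ(n)} for some bijection σ : ℕ → ℕ and ζ is nonincreasing), then ζ ≼ η. -/
noncomputable section

open Filter Finset

lemma antitone_sum_le_range (ζ : ℕ → ℝ) (hζ : Antitone ζ)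
    (G : Finset ℕ) : ∑ k ∈ G, ζ k ≤ ∑ k ∈ range G.card, ζ k := by
  induction G using Finset.strongInduction with
  | _ G ih =>
    rcases G.eq_empty_or_nonempty with rfl | hne
    · simp
    · set m := G.max' hne with hm
      have hmem : m ∈ G := G.max'_mem hne
      obtain ⟨c, hc⟩ : ∃ c, G.card = c + 1 :=
        ⟨G.card - 1, (Nat.succ_pred_eq_of_pos (Finset.card_pos.mpr hne)).symm⟩
      have hsub : G ⊆ range (m + 1) := by
        intro x hx
        simpa [Nat.lt_succ_iff] using G.le_max' x hx
      have hcm : c ≤ m := by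
        have := Finset.card_le_card hsub
        simp [hc] at this
        omega
      have hζm : ζ m ≤ ζ c := hζ hcm
      have herase : (G.erase m).card = c := by
        rw [Finset.card_erase_of_mem hmem, hc]; omega
      have hih := ih (G.erase m) (Finset.erase_ssubset hmem)
      rw [herase] at hih
      calc ∑ k ∈ G, ζ k = ζ m + ∑ k ∈ G.erase m, ζ k :=
            (Finset.add_sum_erase _ _ hmem).symm
        _ ≤ ζ c + ∑ k ∈ range c, ζ k := add_le_add hζm hih
        _ = ∑ k ∈ range (c + 1), ζ k := by rw [Finset.sum_range_succ]; ring
        _ = ∑ k ∈ range G.card, ζ k := by rw [hc]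

/-- If `P` is substochastic and `liminf_n (n − ∑_{i<n}∑_{j<n} P_{ij}) = 0`,
then (i) `P` is doubly stochastic, and (ii) every nonincreasing rearrangement of `Pη`
is strongly majorized by `η`, for every `η ∈ c₀*`. -/
theorem stmt_6 (P : ℕ → ℕ → ℝ) (hP : Substochastic P)
    (h : liminf (fun n : ℕ =>
        (((n : ℝ) - ∑ i ∈ range n, ∑ j ∈ range n, P i j : ℝ) : EReal)) atTop = 0) :
    ((∀ i, HasSum (fun j => P i j) (1 : ℝ)) ∧ (∀ j, HasSum (fun i => P i j) (1 : ℝ))) ∧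
    (∀ η : ℕ → ℝ, IsCoStar η → ∀ σ : ℕ → ℕ, Function.Bijective σ →
      ∀ ζ : ℕ → ℝ, (∀ n, ζ n = ∑' j, P (σ n) j * η j) → Antitone ζ →
        SMaj ζ η) := by
  obtain ⟨hpos, hrow, hcol⟩ := hP
  have hrowS : ∀ i, Summable (fun j => P i j) := fun i =>
    summable_of_sum_le (fun j => hpos i j) (fun s => hrow i s)
  have hcolS : ∀ j, Summable (fun i => P i j) := fun j =>
    summable_of_sum_le (fun i => hpos i j) (fun s => hcol j s)
  -- part (i), rows
  have hrowOne : ∀ i, HasSum (fun j => P i j) 1 := by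
    intro i0
    have hle : ∑' j, P i0 j ≤ 1 := Summable.tsum_le_of_sum_le (hrowS i0) (hrow i0)
    have hge : (1 : ℝ) ≤ ∑' j, P i0 j := by
      by_contra hlt
      push_neg at hlt
      set t := ∑' j, P i0 j with ht
      have hev : ∀ᶠ n : ℕ in atTop,
          ((1 - t : ℝ) : EReal) ≤
            (((n : ℝ) - ∑ i ∈ range n, ∑ j ∈ range n, P i j : ℝ) : EReal) := by
        filter_upwards [eventually_ge_atTop (i0 + 1)] with n hn
        rw [EReal.coe_le_coe_iff]
        have hi0 : i0 ∈ range n := mem_range.mpr (by omega)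
        have h1 : ∑ j ∈ range n, P i0 j ≤ t :=
          Summable.sum_le_tsum (range n) (fun j _ => hpos i0 j) (hrowS i0)
        have h2 : ∑ i ∈ (range n).erase i0, ∑ j ∈ range n, P i j ≤
            ((range n).erase i0).card := by
          calc ∑ i ∈ (range n).erase i0, ∑ j ∈ range n, P i j
              ≤ ∑ _i ∈ (range n).erase i0, (1 : ℝ) :=
                Finset.sum_le_sum (fun i _ => hrow i (range n))
            _ = ((range n).erase i0).card := by simp
        have hcard : (((range n).erase i0).card : ℝ) = (n : ℝ) - 1 := by
          rw [Finset.card_erase_of_mem hi0, Finset.card_range]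
          have : 1 ≤ n := by omega
          push_cast [Nat.cast_sub this]
          ring
        have hsplit : ∑ i ∈ range n, ∑ j ∈ range n, P i j =
            ∑ j ∈ range n, P i0 j + ∑ i ∈ (range n).erase i0, ∑ j ∈ range n, P i j :=
          (Finset.add_sum_erase _ _ hi0).symm
        rw [hsplit]
        rw [hcard] at h2
        linarith
      have hliminf := le_liminf_of_le (by isBoundedDefault) hev
      rw [h] at hliminf
      have : (1 - t : ℝ) ≤ 0 := by
        rwa [show (0 : EReal) = ((0 : ℝ) : EReal) by simp, EReal.coe_le_coe_iff] at hliminf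
      linarith
    have : ∑' j, P i0 j = 1 := le_antisymm hle hge
    exact this ▸ (hrowS i0).hasSum
  -- part (i), columns
  have hcolOne : ∀ j, HasSum (fun i => P i j) 1 := by
    intro j0
    have hle : ∑' i, P i j0 ≤ 1 := Summable.tsum_le_of_sum_le (hcolS j0) (hcol j0)
    have hge : (1 : ℝ) ≤ ∑' i, P i j0 := by
      by_contra hlt
      push_neg at hlt
      set t := ∑' i, P i j0 with ht
      have hev : ∀ᶠ n : ℕ in atTop,
          ((1 - t : ℝ) : EReal) ≤
            (((n : ℝ) - ∑ i ∈ range n, ∑ j ∈ range n, P i j : ℝ) : EReal) := by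
        filter_upwards [eventually_ge_atTop (j0 + 1)] with n hn
        rw [EReal.coe_le_coe_iff]
        have hj0 : j0 ∈ range n := mem_range.mpr (by omega)
        have h1 : ∑ i ∈ range n, P i j0 ≤ t :=
          Summable.sum_le_tsum (range n) (fun i _ => hpos i j0) (hcolS j0)
        have h2 : ∑ j ∈ (range n).erase j0, ∑ i ∈ range n, P i j ≤
            ((range n).erase j0).card := by
          calc ∑ j ∈ (range n).erase j0, ∑ i ∈ range n, P i j
              ≤ ∑ _j ∈ (range n).erase j0, (1 : ℝ) :=
                Finset.sum_le_sum (fun j _ => hcol j (range n))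
            _ = ((range n).erase j0).card := by simp
        have hcard : (((range n).erase j0).card : ℝ) = (n : ℝ) - 1 := by
          rw [Finset.card_erase_of_mem hj0, Finset.card_range]
          have : 1 ≤ n := by omega
          push_cast [Nat.cast_sub this]
          ring
        have hsplit : ∑ i ∈ range n, ∑ j ∈ range n, P i j =
            ∑ i ∈ range n, P i j0 + ∑ j ∈ (range n).erase j0, ∑ i ∈ range n, P i j := by
          rw [Finset.sum_comm]
          exact (Finset.add_sum_erase _ _ hj0).symm
        rw [hsplit]
        rw [hcard] at h2
        linarith
      have hliminf := le_liminf_of_le (by isBoundedDefault) hev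
      rw [h] at hliminf
      have : (1 - t : ℝ) ≤ 0 := by
        rwa [show (0 : EReal) = ((0 : ℝ) : EReal) by simp, EReal.coe_le_coe_iff] at hliminf
      linarith
    have : ∑' i, P i j0 = 1 := le_antisymm hle hge
    exact this ▸ (hcolS j0).hasSum
  refine ⟨⟨hrowOne, hcolOne⟩, ?_⟩
  -- part (ii)
  rintro η ⟨hη0, hηanti, hηtend⟩ σ hσ ζ hζdef hζanti
  have hηb : ∀ j, η j ≤ η 0 := fun j => hηanti (Nat.zero_le j)
  have hfS : ∀ i, Summable (fun j => P i j * η j) := by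
    intro i
    refine Summable.of_nonneg_of_le (fun j => mul_nonneg (hpos i j) (hη0 j))
      (fun j => mul_le_mul_of_nonneg_left (hηb j) (hpos i j)) ((hrowS i).mul_right (η 0))
  -- the key estimate used for both Maj and the liminf statement;
  -- for any n : partial sums of ζ dominate ∑_{j<n} c_j η_j where c_j is a column partial sum.
  have hMaj : Maj ζ η := by
    intro n
    set q : ℕ → ℝ := fun j => ∑ k ∈ range n, P (σ k) j with hq
    have hq0 : ∀ j, 0 ≤ q j := fun j => Finset.sum_nonneg (fun k _ => hpos (σ k) j)
    have hq1 : ∀ j, q j ≤ 1 := by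
      intro j
      have : q j = ∑ i ∈ (range n).image σ, P i j := by
        rw [Finset.sum_image (fun a _ b _ hab => hσ.injective hab)]
      rw [this]
      exact hcol j _
    have hqS : Summable q := summable_sum (fun k _ => hrowS (σ k))
    have hqtsum : ∑' j, q j = (n : ℝ) := by
      rw [Summable.tsum_finsetSum (fun k _ => hrowS (σ k))]
      have : ∀ k ∈ range n, ∑' j, P (σ k) j = 1 := fun k _ => (hrowOne (σ k)).tsum_eq
      rw [Finset.sum_congr rfl this]
      simp
    have hqηS : Summable (fun j => q j * η j) := by
      refine Summable.of_nonneg_of_le (fun j => mul_nonneg (hq0 j) (hη0 j))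
        (fun j => mul_le_mul_of_nonneg_left (hηb j) (hq0 j)) (hqS.mul_right (η 0))
    have hζsum : ∑ k ∈ range n, ζ k = ∑' j, q j * η j := by
      simp only [hζdef]
      rw [← Summable.tsum_finsetSum (fun k (_ : k ∈ range n) => hfS (σ k))]
      congr 1
      ext j
      rw [hq, Finset.sum_mul]
    set A := ∑ j ∈ range n, q j with hA
    have hsplitq : ∑' j, q (j + n) = (n : ℝ) - A := by
      have := Summable.sum_add_tsum_nat_add n hqS
      rw [hqtsum] at this
      linarith
    have hsplitqη : ∑' j, q j * η j =
        ∑ j ∈ range n, q j * η j + ∑' j, q (j + n) * η (j + n) := by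
      exact (Summable.sum_add_tsum_nat_add n hqηS).symm
    have hbound1 : ∑ j ∈ range n, q j * η j ≤
        ∑ j ∈ range n, η j - ((n : ℝ) - A) * η n := by
      have hpt : ∀ j ∈ range n, q j * η j ≤ η j - (1 - q j) * η n := by
        intro j hj
        have hjn : j ≤ n := le_of_lt (mem_range.mp hj)
        have h1 : η n ≤ η j := hηanti hjn
        have h2 : 0 ≤ 1 - q j := by linarith [hq1 j]
        nlinarith
      calc ∑ j ∈ range n, q j * η j ≤ ∑ j ∈ range n, (η j - (1 - q j) * η n) :=
            Finset.sum_le_sum hpt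
        _ = ∑ j ∈ range n, η j - ((n : ℝ) - A) * η n := by
            rw [Finset.sum_sub_distrib, ← Finset.sum_mul, Finset.sum_sub_distrib]
            simp [hA]
    have hbound2 : ∑' j, q (j + n) * η (j + n) ≤ ((n : ℝ) - A) * η n := by
      have hS1 : Summable (fun j => q (j + n) * η (j + n)) :=
        (summable_nat_add_iff n).mpr hqηS
      have hS2 : Summable (fun j => q (j + n) * η n) :=
        ((summable_nat_add_iff n).mpr hqS).mul_right (η n)
      have : ∑' j, q (j + n) * η (j + n) ≤ ∑' j, q (j + n) * η n := by
        refine Summable.tsum_le_tsum (fun j => ?_) hS1 hS2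
        exact mul_le_mul_of_nonneg_left (hηanti (by omega)) (hq0 _)
      calc ∑' j, q (j + n) * η (j + n) ≤ ∑' j, q (j + n) * η n := this
        _ = (∑' j, q (j + n)) * η n := tsum_mul_right
        _ = ((n : ℝ) - A) * η n := by rw [hsplitq]
    rw [hζsum, hsplitqη]
    linarith
  refine ⟨hMaj, ?_⟩
  -- liminf part
  set D : ℕ → ℝ := fun n => ∑ j ∈ range n, (η j - ζ j) with hD
  have hDnonneg : ∀ n, 0 ≤ D n := by
    intro n
    have h1 : D n = ∑ j ∈ range n, η j - ∑ j ∈ range n, ζ j := by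
      simp only [hD]; exact Finset.sum_sub_distrib _ _
    rw [h1]; linarith [hMaj n]
  have hge : (0 : EReal) ≤ liminf (fun n => ((D n : ℝ) : EReal)) atTop := by
    refine le_liminf_of_le (by isBoundedDefault) ?_
    filter_upwards with n
    exact EReal.coe_nonneg.mpr (hDnonneg n)
  have hle : ∀ ε : ℝ, 0 < ε → liminf (fun n => ((D n : ℝ) : EReal)) atTop ≤ (ε : EReal) := by
    intro ε hε
    have hη0pos : (0 : ℝ) < η 0 + 1 := by linarith [hη0 0]
    set ε' := ε / (η 0 + 1) with hε'
    have hε'pos : 0 < ε' := div_pos hε hη0pos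
    have hfreq : ∃ᶠ n : ℕ in atTop,
        (((n : ℝ) - ∑ i ∈ range n, ∑ j ∈ range n, P i j : ℝ) : EReal) < (ε' : EReal) := by
      apply frequently_lt_of_liminf_lt (by isBoundedDefault)
      rw [h]
      exact_mod_cast EReal.coe_pos.mpr hε'pos
    refine liminf_le_of_frequently_le' ?_
    refine hfreq.mono ?_
    intro n hn
    rw [EReal.coe_lt_coe_iff] at hn
    rw [EReal.coe_le_coe_iff]
    -- the estimate: D n ≤ η 0 * gap
    set e := Equiv.ofBijective σ hσ with he
    set G := (range n).image e.symm with hG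
    have hGcard : G.card = n := by
      rw [hG, Finset.card_image_of_injective _ e.symm.injective, Finset.card_range]
    have hsum1 : ∑ k ∈ G, ζ k = ∑ i ∈ range n, (∑' j, P i j * η j) := by
      rw [hG, Finset.sum_image (fun a _ b _ hab => e.symm.injective hab)]
      refine Finset.sum_congr rfl (fun i _ => ?_)
      rw [hζdef]
      have hsi : σ (e.symm i) = i := e.apply_symm_apply i
      rw [hsi]
    have hζge : ∑ i ∈ range n, (∑' j, P i j * η j) ≤ ∑ k ∈ range n, ζ k := by
      rw [← hsum1]
      have := antitone_sum_le_range ζ hζanti G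
      rwa [hGcard] at this
    have hptsum : ∀ i, ∑ j ∈ range n, P i j * η j ≤ ∑' j, P i j * η j :=
      fun i => Summable.sum_le_tsum (range n) (fun j _ => mul_nonneg (hpos i j) (hη0 j)) (hfS i)
    have hstep : ∑ j ∈ range n, (∑ i ∈ range n, P i j) * η j ≤ ∑ k ∈ range n, ζ k := by
      calc ∑ j ∈ range n, (∑ i ∈ range n, P i j) * η j
          = ∑ i ∈ range n, ∑ j ∈ range n, P i j * η j := by
            rw [Finset.sum_comm]
            exact Finset.sum_congr rfl (fun j _ => by rw [Finset.sum_mul])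
        _ ≤ ∑ i ∈ range n, (∑' j, P i j * η j) := Finset.sum_le_sum (fun i _ => hptsum i)
        _ ≤ ∑ k ∈ range n, ζ k := hζge
    have hgap : ∑ j ∈ range n, (1 - ∑ i ∈ range n, P i j) * η j ≤
        η 0 * ((n : ℝ) - ∑ i ∈ range n, ∑ j ∈ range n, P i j) := by
      have hpt : ∀ j ∈ range n, (1 - ∑ i ∈ range n, P i j) * η j ≤
          (1 - ∑ i ∈ range n, P i j) * η 0 := by
        intro j _
        have h1 : 0 ≤ 1 - ∑ i ∈ range n, P i j := by linarith [hcol j (range n)]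
        exact mul_le_mul_of_nonneg_left (hηb j) h1
      calc ∑ j ∈ range n, (1 - ∑ i ∈ range n, P i j) * η j
          ≤ ∑ j ∈ range n, (1 - ∑ i ∈ range n, P i j) * η 0 := Finset.sum_le_sum hpt
        _ = ((n : ℝ) - ∑ j ∈ range n, ∑ i ∈ range n, P i j) * η 0 := by
            rw [← Finset.sum_mul, Finset.sum_sub_distrib]
            simp
        _ = η 0 * ((n : ℝ) - ∑ i ∈ range n, ∑ j ∈ range n, P i j) := by
            rw [Finset.sum_comm]; ring
    have hDle : D n ≤ η 0 * ((n : ℝ) - ∑ i ∈ range n, ∑ j ∈ range n, P i j) := by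
      rw [hD]
      have e1 : ∑ j ∈ range n, (η j - ζ j) = ∑ j ∈ range n, η j - ∑ j ∈ range n, ζ j :=
        Finset.sum_sub_distrib _ _
      have e2 : ∑ j ∈ range n, η j - ∑ j ∈ range n, (∑ i ∈ range n, P i j) * η j =
          ∑ j ∈ range n, (1 - ∑ i ∈ range n, P i j) * η j := by
        rw [← Finset.sum_sub_distrib]
        refine Finset.sum_congr rfl (fun j _ => by ring)
      calc ∑ j ∈ range n, (η j - ζ j)
          = ∑ j ∈ range n, η j - ∑ j ∈ range n, ζ j := e1
        _ ≤ ∑ j ∈ range n, η j - ∑ j ∈ range n, (∑ i ∈ range n, P i j) * η j := by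
            linarith [hstep]
        _ = ∑ j ∈ range n, (1 - ∑ i ∈ range n, P i j) * η j := e2
        _ ≤ η 0 * ((n : ℝ) - ∑ i ∈ range n, ∑ j ∈ range n, P i j) := hgap
    have hfin : η 0 * ((n : ℝ) - ∑ i ∈ range n, ∑ j ∈ range n, P i j) ≤ ε := by
      have hη00 := hη0 0
      have h1 : η 0 * ((n : ℝ) - ∑ i ∈ range n, ∑ j ∈ range n, P i j) ≤ η 0 * ε' :=
        mul_le_mul_of_nonneg_left (le_of_lt hn) hη00
      have h2 : η 0 * ε' ≤ ε := by
        rw [hε']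
        rw [mul_div_assoc'] at *
        rw [div_le_iff₀ hη0pos]
        nlinarith
      linarith
    linarith
  have hle0 : liminf (fun n => ((D n : ℝ) : EReal)) atTop ≤ 0 := by
    refine le_of_forall_gt_imp_ge_of_dense ?_
    intro a ha
    rcases eq_top_or_lt_top a with rfl | hatop
    · exact le_top
    · obtain ⟨r, hr0, hra⟩ := EReal.exists_between_coe_real ha
      have hr : 0 < r := by exact_mod_cast EReal.coe_pos.mp (by exact_mod_cast hr0)
      exact le_trans (hle r hr) (le_of_lt hra)
  exact le_antisymm hle0 hge


end
end

section
/- Let ξ, η ∈ c₀* with ξ_n > 0 for every n and ξ ≺ η. Then there exists a matrix W : ℕ × ℕ → ℝ whose rows form an orthonormal family in ℓ²(ℕ) (i.e., W is the matrix of a co-isometry on real ℓ²(ℕ)) such that ξ_i = ∑_{j=1}^∞ W_{ij}² η_j for every i. -/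
noncomputable section

open Filter Finset

namespace Stmt7Aux

/-- finite support (bounded form) -/
def FS (x : ℕ → ℝ) : Prop := ∃ N : ℕ, ∀ m, N ≤ m → x m = 0

/-- weighted dot product -/
def dot (w x y : ℕ → ℝ) : ℝ := ∑' m, w m * x m * y m

lemma FS.summable_mul_right {u : ℕ → ℝ} (hu : FS u) (f : ℕ → ℝ) :
    Summable fun m => f m * u m := by
  obtain ⟨N, hN⟩ := hu
  apply summable_of_ne_finset_zero (s := range N)
  intro m hm
  rw [hN m (by simpa using hm), mul_zero]

lemma dot_comm (w x y : ℕ → ℝ) : dot w x y = dot w y x :=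
  tsum_congr fun m => by ring

lemma dot_comb_right (w x u v : ℕ → ℝ) (A B : ℝ) (hu : FS u) (hv : FS v) :
    dot w x (fun m => A * u m + B * v m) = A * dot w x u + B * dot w x v := by
  unfold dot
  have h1 : Summable fun m => A * (w m * x m * u m) :=
    (hu.summable_mul_right (fun m => w m * x m)).mul_left A
  have h2 : Summable fun m => B * (w m * x m * v m) :=
    (hv.summable_mul_right (fun m => w m * x m)).mul_left B
  calc (∑' m, w m * x m * (A * u m + B * v m))
      = ∑' m, (A * (w m * x m * u m) + B * (w m * x m * v m)) :=
        tsum_congr fun m => by ring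
    _ = (∑' m, A * (w m * x m * u m)) + ∑' m, B * (w m * x m * v m) := Summable.tsum_add h1 h2
    _ = A * dot w x u + B * dot w x v := by rw [tsum_mul_left, tsum_mul_left]; rfl

lemma dot_comb_left (w y u v : ℕ → ℝ) (A B : ℝ) (hu : FS u) (hv : FS v) :
    dot w (fun m => A * u m + B * v m) y = A * dot w u y + B * dot w v y := by
  rw [dot_comm, dot_comb_right w y u v A B hu hv, dot_comm w y u, dot_comm w y v]

lemma FS.comb {x y : ℕ → ℝ} (hx : FS x) (hy : FS y) (A B : ℝ) :
    FS fun m => A * x m + B * y m := by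
  obtain ⟨N, hN⟩ := hx
  obtain ⟨M, hM⟩ := hy
  exact ⟨max N M, fun m hm => by
    simp only []
    rw [hN m (le_trans (le_max_left _ _) hm), hM m (le_trans (le_max_right _ _) hm)]; ring⟩

/-- standard basis vector -/
def E (j : ℕ) : ℕ → ℝ := fun m => if m = j then 1 else 0

lemma FS_E (j : ℕ) : FS (E j) :=
  ⟨j + 1, fun m hm => by simp [E]; omega⟩

lemma dot_E (w : ℕ → ℝ) (j j' : ℕ) : dot w (E j) (E j') = if j = j' then w j else 0 := by
  unfold dot
  rw [tsum_eq_single j]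
  · by_cases h : j = j' <;> simp [E, h]
  · intro m hm; simp [E, hm]

/-- The invariant carried along the recursive construction. -/
def Inv (ξ η : ℕ → ℝ) (k : ℕ) (g : ℕ → ℕ → ℝ) (μ : ℕ → ℝ) : Prop :=
  (∀ j, FS (g j)) ∧
  (∀ j j', dot 1 (g j) (g j') = if j = j' then 1 else 0) ∧
  (∀ j j', dot η (g j) (g j') = if j = j' then μ j else 0) ∧
  Tendsto μ atTop (nhds 0) ∧
  ∀ n, ∑ i ∈ range n, ξ (k + i) ≤ ∑ i ∈ range n, μ i






lemma step_ex (ξ η : ℕ → ℝ) (hanti : Antitone ξ) (hpos : ∀ n, 0 < ξ n)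
    (k : ℕ) (g : ℕ → ℕ → ℝ) (μ : ℕ → ℝ) (h : Inv ξ η k g μ) :
    ∃ (f : ℕ → ℝ) (g2 : ℕ → ℕ → ℝ) (μ2 : ℕ → ℝ),
      Inv ξ η (k + 1) g2 μ2 ∧ FS f ∧ dot 1 f f = 1 ∧ dot η f f = ξ k ∧
      (∀ j, dot 1 f (g2 j) = 0) ∧
      (∀ x : ℕ → ℝ, (∀ j, dot 1 x (g j) = 0) →
        dot 1 x f = 0 ∧ ∀ j, dot 1 x (g2 j) = 0) := by
  classical
  obtain ⟨hFSg, horth, hdorth, hμ0, hmajk⟩ := h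
  have hex : ∃ j, μ j ≤ ξ k := by
    obtain ⟨j, hj⟩ := (hμ0.eventually_lt_const (hpos k)).exists
    exact ⟨j, le_of_lt hj⟩
  rcases Nat.eq_zero_or_pos (Nat.find hex) with hq0 | hq0
  · -- case q = 0 : μ 0 = ξ k, take f = g 0, drop column 0
    have hq : μ 0 ≤ ξ k := by have := Nat.find_spec hex; rwa [hq0] at this
    have he : μ 0 = ξ k := by
      have h1 := hmajk 1
      simp only [Finset.sum_range_one, Nat.add_zero] at h1
      linarith
    refine ⟨g 0, fun j => g (j + 1), fun j => μ (j + 1),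
      ⟨fun j => hFSg (j + 1), ?_, ?_, ?_, ?_⟩, hFSg 0, ?_, ?_, ?_, ?_⟩
    · intro j j'
      rw [horth]
      by_cases hjj : j = j' <;> simp [hjj]
    · intro j j'
      rw [hdorth]
      by_cases hjj : j = j' <;> simp [hjj]
    · exact (tendsto_add_atTop_iff_nat 1).2 hμ0
    · intro n
      have h5 := hmajk (n + 1)
      rw [Finset.sum_range_succ' (fun i => ξ (k + i)) n, Finset.sum_range_succ' μ n] at h5
      have hre : ∑ i ∈ range n, ξ (k + 1 + i) = ∑ i ∈ range n, ξ (k + (i + 1)) :=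
        Finset.sum_congr rfl fun i _ => by rw [show k + 1 + i = k + (i + 1) by omega]
      rw [hre]
      simp only [Nat.add_zero] at h5
      linarith
    · rw [horth]; simp
    · rw [hdorth]; simp [he]
    · intro j; rw [horth]; simp
    · intro x hx; exact ⟨hx 0, fun j => hx (j + 1)⟩
  · -- case q = p + 1
    obtain ⟨p, hp⟩ : ∃ p, Nat.find hex = p + 1 := ⟨Nat.find hex - 1, by omega⟩
    have hq : μ (p + 1) ≤ ξ k := by have := Nat.find_spec hex; rwa [hp] at this
    have hpgt : ξ k < μ p :=
      lt_of_not_ge (Nat.find_min hex (by omega : p < Nat.find hex))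
    have hab : 0 < μ p - μ (p + 1) := by linarith
    set t : ℝ := (ξ k - μ (p + 1)) / (μ p - μ (p + 1)) with htdef
    have ht0 : 0 ≤ t := div_nonneg (by linarith) (le_of_lt hab)
    have ht1 : t ≤ 1 := by rw [div_le_one hab]; linarith
    set c : ℝ := Real.sqrt t with hcdef
    set s : ℝ := Real.sqrt (1 - t) with hsdef
    have hc2 : c ^ 2 = t := Real.sq_sqrt ht0
    have hs2 : s ^ 2 = 1 - t := Real.sq_sqrt (by linarith)
    have hcs : c ^ 2 + s ^ 2 = 1 := by rw [hc2, hs2]; ring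
    have hta : t * (μ p - μ (p + 1)) = ξ k - μ (p + 1) := div_mul_cancel₀ _ (ne_of_gt hab)
    have key1 : c ^ 2 * μ p + s ^ 2 * μ (p + 1) = ξ k := by
      rw [hc2, hs2]; linear_combination hta
    have key2 : s ^ 2 * μ p + c ^ 2 * μ (p + 1) = μ p + μ (p + 1) - ξ k := by
      rw [hc2, hs2]; linear_combination -hta
    set gp' : ℕ → ℝ := fun m => (-s) * g p m + c * g (p + 1) m with hgp'def
    set f : ℕ → ℝ := fun m => c * g p m + s * g (p + 1) m with hfdef
    set g2 : ℕ → ℕ → ℝ :=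
      fun j => if j < p then g j else if j = p then gp' else g (j + 1) with hg2def
    set μ2 : ℕ → ℝ :=
      fun j => if j < p then μ j else if j = p then μ p + μ (p + 1) - ξ k else μ (j + 1)
      with hμ2def
    -- expansion helpers
    have e1 : ∀ (w u : ℕ → ℝ), dot w u gp' = -s * dot w u (g p) + c * dot w u (g (p + 1)) :=
      fun w u => dot_comb_right w u (g p) (g (p + 1)) (-s) c (hFSg p) (hFSg (p + 1))
    have e2 : ∀ (w u : ℕ → ℝ), dot w gp' u = -s * dot w (g p) u + c * dot w (g (p + 1)) u :=
      fun w u => dot_comb_left w u (g p) (g (p + 1)) (-s) c (hFSg p) (hFSg (p + 1))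
    have f1 : ∀ (w u : ℕ → ℝ), dot w u f = c * dot w u (g p) + s * dot w u (g (p + 1)) :=
      fun w u => dot_comb_right w u (g p) (g (p + 1)) c s (hFSg p) (hFSg (p + 1))
    have f2 : ∀ (w u : ℕ → ℝ), dot w f u = c * dot w (g p) u + s * dot w (g (p + 1)) u :=
      fun w u => dot_comb_left w u (g p) (g (p + 1)) c s (hFSg p) (hFSg (p + 1))
    have hgl : ∀ i, i < p → g2 i = g i := fun i hi => by simp [hg2def, hi]
    have hgp : g2 p = gp' := by simp [hg2def]
    have hgr : ∀ i, p < i → g2 i = g (i + 1) := fun i hi => by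
      have h1 : ¬ i < p := by omega
      have h2 : i ≠ p := by omega
      simp [hg2def, h1, h2]
    -- the generic orthogonality propagation
    have key : ∀ (w ν : ℕ → ℝ),
        (∀ j j', dot w (g j) (g j') = if j = j' then ν j else 0) →
        ∀ j j', dot w (g2 j) (g2 j') =
          if j = j' then
            (if j < p then ν j else if j = p then s ^ 2 * ν p + c ^ 2 * ν (p + 1)
             else ν (j + 1))
          else 0 := by
      intro w ν hν j j'
      rcases lt_trichotomy j p with hj | hj | hj <;>
        rcases lt_trichotomy j' p with hj' | hj' | hj'
      · -- j < p, j' < p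
        rw [hgl j hj, hgl j' hj', hν]
        by_cases hjj : j = j'
        · subst hjj; simp [hj]
        · simp [hjj]
      · -- j < p, j' = p
        rw [hgl j hj, hj', hgp, e1, hν, hν]
        have h1 : j ≠ p := by omega
        have h2 : j ≠ p + 1 := by omega
        have h3 : j ≠ j' := by omega
        simp [h1, h2, h3]
      · -- j < p, j' > p
        rw [hgl j hj, hgr j' hj', hν]
        have h3 : j ≠ j' + 1 := by omega
        have h4 : j ≠ j' := by omega
        simp [h3, h4]
      · -- j = p, j' < p
        rw [hj, hgp, hgl j' hj', e2, hν, hν]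
        have h1 : p ≠ j' := by omega
        have h2 : p + 1 ≠ j' := by omega
        have h3 : j ≠ j' := by omega
        simp [h1, h2, h3]
      · -- j = p, j' = p
        rw [hj, hj', hgp, e2, e1, e1, hν, hν, hν, hν]
        split_ifs <;> first | ring1 | (exfalso; omega)
      · -- j = p, j' > p
        rw [hj, hgp, hgr j' hj', e2, hν, hν]
        have h3 : p ≠ j' + 1 := by omega
        have h4 : p + 1 ≠ j' + 1 := by omega
        have h5 : p ≠ j' := by omega
        simp [h3, h4, h5]
      · -- j > p, j' < p
        rw [hgr j hj, hgl j' hj', hν]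
        have h3 : j + 1 ≠ j' := by omega
        have h4 : j ≠ j' := by omega
        simp [h3, h4]
      · -- j > p, j' = p
        rw [hgr j hj, hj', hgp, e1, hν, hν]
        have h3 : j + 1 ≠ p := by omega
        have h4 : j + 1 ≠ p + 1 := by omega
        have h5 : j ≠ p := by omega
        simp [h3, h4, h5]
      · -- j > p, j' > p
        rw [hgr j hj, hgr j' hj', hν]
        by_cases hjj : j = j'
        · subst hjj
          have h1 : ¬ j < p := by omega
          have h2 : j ≠ p := by omega
          simp [h1, h2]
        · have h3 : j + 1 ≠ j' + 1 := by omega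
          simp [hjj, h3]
    refine ⟨f, g2, μ2, ⟨?_, ?_, ?_, ?_, ?_⟩, ?_, ?_, ?_, ?_, ?_⟩
    · -- FS g2
      intro j
      simp only [hg2def]
      split_ifs with h1 h2
      · exact hFSg j
      · exact (hFSg p).comb (hFSg (p + 1)) (-s) c
      · exact hFSg (j + 1)
    · -- orth
      intro j j'
      rw [key 1 (fun _ => 1) horth]
      by_cases hjj : j = j'
      · simp only [if_pos hjj]
        split_ifs <;> linarith
      · simp [hjj]
    · -- dorth
      intro j j'
      rw [key η μ hdorth]
      by_cases hjj : j = j'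
      · simp only [if_pos hjj, hμ2def]
        split_ifs <;> [rfl; exact key2; rfl]
      · simp [hjj]
    · -- tendsto
      have htail : Tendsto (fun j => μ (j + 1)) atTop (nhds 0) :=
        (tendsto_add_atTop_iff_nat 1).2 hμ0
      apply htail.congr'
      filter_upwards [eventually_ge_atTop (p + 1)] with j hj
      have h1 : ¬ j < p := by omega
      have h2 : j ≠ p := by omega
      simp [hμ2def, h1, h2]
    · -- majorization
      intro n
      by_cases hn : n ≤ p
      · have h1 : ∑ i ∈ range n, μ2 i = ∑ i ∈ range n, μ i := by
          refine Finset.sum_congr rfl fun i hi => ?_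
          have : i < p := by have := Finset.mem_range.mp hi; omega
          simp [hμ2def, this]
        rw [h1]
        refine le_trans (Finset.sum_le_sum fun i _ => hanti (by omega : k + i ≤ k + 1 + i))
          (hmajk n)
      · push_neg at hn
        have hn' : p + 1 ≤ n := hn
        have hKI : ∑ i ∈ range n, μ2 i = ∑ i ∈ range (n + 1), μ i - ξ k := by
          induction n, hn' using Nat.le_induction with
          | base =>
            rw [Finset.sum_range_succ, Finset.sum_range_succ (f := μ),
              Finset.sum_range_succ (f := μ)]
            have h1 : ∑ i ∈ range p, μ2 i = ∑ i ∈ range p, μ i :=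
              Finset.sum_congr rfl fun i hi => by
                simp [hμ2def, Finset.mem_range.mp hi]
            have h2 : μ2 p = μ p + μ (p + 1) - ξ k := by simp [hμ2def]
            rw [h1, h2]; ring
          | succ m hm ih =>
            have ihh := ih (by omega)
            rw [Finset.sum_range_succ, ihh, Finset.sum_range_succ (f := μ) (n := m + 1)]
            have h3 : μ2 m = μ (m + 1) := by
              have ha : ¬ m < p := by omega
              have hb : m ≠ p := by omega
              simp [hμ2def, ha, hb]
            rw [h3]; ring
        rw [hKI]
        have h5 := hmajk (n + 1)
        rw [Finset.sum_range_succ' (fun i => ξ (k + i)) n] at h5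
        have hre : ∑ i ∈ range n, ξ (k + 1 + i) = ∑ i ∈ range n, ξ (k + (i + 1)) :=
          Finset.sum_congr rfl fun i _ => by rw [show k + 1 + i = k + (i + 1) by omega]
        rw [hre]
        simp only [Nat.add_zero] at h5
        linarith
    · -- FS f
      exact (hFSg p).comb (hFSg (p + 1)) c s
    · -- dot 1 f f = 1
      rw [f1, f2, f2, horth, horth, horth, horth]
      split_ifs <;> first | linear_combination hcs | (exfalso; omega)
    · -- dot η f f = ξ k
      rw [f1, f2, f2, hdorth, hdorth, hdorth, hdorth]
      split_ifs <;> first | linear_combination key1 | (exfalso; omega)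
    · -- ∀ j, dot 1 f (g2 j) = 0
      intro j
      rcases lt_trichotomy j p with hj | hj | hj
      · rw [hgl j hj, f2, horth, horth]
        have h1 : p ≠ j := by omega
        have h2 : p + 1 ≠ j := by omega
        simp [h1, h2]
      · rw [hj, hgp, e1, f2, f2, horth, horth, horth, horth]
        split_ifs <;> first | ring1 | (exfalso; omega)
      · rw [hgr j hj, f2, horth, horth]
        have h3 : p ≠ j + 1 := by omega
        have h4 : p + 1 ≠ j + 1 := by omega
        simp [h3, h4, show p ≠ j by omega]
    · -- propagation
      intro x hx
      constructor
      · rw [f1, hx, hx]; ring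
      · intro j
        rcases lt_trichotomy j p with hj | hj | hj
        · rw [hgl j hj]; exact hx j
        · rw [hj, hgp, e1, hx, hx]; ring
        · rw [hgr j hj]; exact hx (j + 1)




lemma main (ξ η : ℕ → ℝ) (hanti : Antitone ξ) (hη0 : Tendsto η atTop (nhds 0))
    (hpos : ∀ n, 0 < ξ n)
    (hmaj : ∀ n : ℕ, ∑ j ∈ range n, ξ j ≤ ∑ j ∈ range n, η j) :
    ∃ f : ℕ → ℕ → ℝ, (∀ i, FS (f i)) ∧
      (∀ i i', dot 1 (f i) (f i') = if i = i' then 1 else 0) ∧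
      (∀ i, dot η (f i) (f i) = ξ i) := by
  have hinit : Inv ξ η 0 E η := by
    refine ⟨fun j => FS_E j, fun j j' => by rw [dot_E]; simp,
      fun j j' => dot_E η j j', hη0, fun n => by simpa using hmaj n⟩
  choose F G M hInv hFS hone hw hfg hprop using step_ex ξ η hanti hpos
  let P : ℕ → Type := fun k => {p : (ℕ → ℕ → ℝ) × (ℕ → ℝ) // Inv ξ η k p.1 p.2}
  let S : ∀ k, P k := fun k => Nat.rec (motive := P) ⟨(E, η), hinit⟩
    (fun k s => ⟨(G k s.1.1 s.1.2 s.2, M k s.1.1 s.1.2 s.2), hInv k s.1.1 s.1.2 s.2⟩) k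
  let f : ℕ → ℕ → ℝ := fun k => F k (S k).1.1 (S k).1.2 (S k).2
  have hFSf : ∀ k, FS (f k) := fun k => hFS k _ _ _
  have honef : ∀ k, dot 1 (f k) (f k) = 1 := fun k => hone k _ _ _
  have hwf : ∀ k, dot η (f k) (f k) = ξ k := fun k => hw k _ _ _
  have hcross : ∀ i i', i < i' → dot 1 (f i) (f i') = 0 := by
    intro i i' hii
    have hind : ∀ m, i + 1 ≤ m → ∀ j, dot 1 (f i) ((S m).1.1 j) = 0 := by
      intro m hm
      induction m, hm using Nat.le_induction with
      | base => exact hfg i (S i).1.1 (S i).1.2 (S i).2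
      | succ n hn ih => exact (hprop n (S n).1.1 (S n).1.2 (S n).2 (f i) ih).2
    exact (hprop i' (S i').1.1 (S i').1.2 (S i').2 (f i) (hind i' hii)).1
  refine ⟨f, hFSf, ?_, hwf⟩
  intro i i'
  rcases lt_trichotomy i i' with h | h | h
  · rw [hcross i i' h]
    have : i ≠ i' := by omega
    simp [this]
  · subst h; simp [honef i]
  · rw [dot_comm, hcross i' i h]
    have : i ≠ i' := by omega
    simp [this]

end Stmt7Aux

/-- If `ξ, η ∈ c₀*` with `ξ_n > 0` for all `n` and `ξ ≺ η`, then there is a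
matrix `W` with orthonormal rows in ℓ² (the matrix of a co-isometry on real ℓ²) such that
`ξ_i = ∑_j W_{ij}² η_j` for every `i`. -/
theorem stmt_7 (ξ η : ℕ → ℝ) (hξ : IsCoStar ξ) (hη : IsCoStar η)
    (hpos : ∀ n, 0 < ξ n) (hmaj : Maj ξ η) :
    ∃ W : ℕ → ℕ → ℝ,
      (∀ i i', HasSum (fun j => W i j * W i' j) (if i = i' then (1 : ℝ) else 0)) ∧
      (∀ i, HasSum (fun j => (W i j) ^ 2 * η j) (ξ i)) := by
  obtain ⟨f, hFSf, horthf, hwf⟩ :=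
    Stmt7Aux.main ξ η hξ.2.1 hη.2.2 hpos hmaj
  refine ⟨f, ?_, ?_⟩
  · intro i i'
    obtain ⟨N, hN⟩ := hFSf i
    have hs : Summable fun j => f i j * f i' j := by
      apply summable_of_ne_finset_zero (s := range N)
      intro m hm
      rw [hN m (by simpa using hm), zero_mul]
    have hv : (∑' j, f i j * f i' j) = Stmt7Aux.dot 1 (f i) (f i') := by
      unfold Stmt7Aux.dot
      exact tsum_congr fun m => by simp
    have hh := hs.hasSum
    rwa [hv, horthf] at hh
  · intro i
    obtain ⟨N, hN⟩ := hFSf i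
    have hs : Summable fun j => (f i j) ^ 2 * η j := by
      apply summable_of_ne_finset_zero (s := range N)
      intro m hm
      rw [hN m (by simpa using hm)]
      ring
    have hv : (∑' j, (f i j) ^ 2 * η j) = Stmt7Aux.dot η (f i) (f i) := by
      unfold Stmt7Aux.dot
      exact tsum_congr fun m => by ring
    have hh := hs.hasSum
    rwa [hv, hwf] at hh

end
end
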